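/- arXiv:1808.06242 — 5 statements merged into one kernel-verified Lean document; each statement's English description precedes it below -/
import Mathlib

section
/- If the categories A(Δ) and A(Δ') are isomorphic (as abstract categories), then the types Δ and Δ' are equivalent. -/
universe u

/-- An algebra of type `Δ = (K i)_{i ∈ I}`: a carrier set with, for each `i`,
a `K i`-ary operation. -/
structure Alg {I : Type u} (K : I → Type u) : Type (u + 1) where
  carrier : Type u
  op : ∀ i, (K i → carrier) → carrier

/-- A homomorphism of algebras of type `K`. -/
@[ext]
structure HomOfAlg {I : Type u} (K : I → Type u) (A B : Alg K) where
  toFun : A.carrier → B.carrier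
  map_op : ∀ i (α : K i → A.carrier), toFun (A.op i α) = B.op i (toFun ∘ α)

/-- The category `A(Δ)` of all algebras of type `K` and homomorphisms. -/
instance algCategory {I : Type u} (K : I → Type u) : CategoryTheory.Category (Alg K) where
  Hom A B := HomOfAlg K A B
  id A := ⟨id, fun _ _ => rfl⟩
  comp f g := ⟨g.toFun ∘ f.toFun, fun i α => by
    show g.toFun (f.toFun _) = _; rw [f.map_op, g.map_op]; rfl⟩
  id_comp f := HomOfAlg.ext rfl
  comp_id f := HomOfAlg.ext rfl
  assoc f g h := HomOfAlg.ext rfl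

/-- The underlying set functor `s : A(Δ) → Set`. -/
def forgetAlg {I : Type u} (K : I → Type u) :
    CategoryTheory.Functor (Alg K) (Type u) where
  obj A := A.carrier
  map f := TypeCat.ofHom f.toFun
  map_id _ := rfl
  map_comp _ _ := rfl

/-- Terms of type `K` over variables `X` (the absolutely free algebra). -/
inductive AlgTerm {I : Type u} (K : I → Type u) (X : Type u) : Type u
  | var : X → AlgTerm K X
  | op : ∀ i, (K i → AlgTerm K X) → AlgTerm K X

/-- The term algebra (absolutely free algebra) on `X`. -/
def TermAlg {I : Type u} (K : I → Type u) (X : Type u) : Alg K :=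
  ⟨AlgTerm K X, AlgTerm.op⟩

/-- Homomorphic extension of an assignment `α : X → A` to the term algebra. -/
def extendHom {I : Type u} {K : I → Type u} {X : Type u} {A : Alg K}
    (α : X → A.carrier) : AlgTerm K X → A.carrier
  | .var x => α x
  | .op i β => A.op i (fun k => extendHom α (β k))

/-- The support of a `K`-ary operation `f : F^K → F`. -/
def supp {F K : Type u} (f : (K → F) → F) : Set (Set K) :=
  {A | ∀ α β : K → F, (∀ k ∈ A, α k = β k) → f α = f β}

/-- Equivalence of types: a bijection of index sets preserving arity cardinalities. -/
def EquivType {I J : Type u} (K : I → Type u) (L : J → Type u) : Prop :=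
  ∃ φ : I ≃ J, ∀ i, Nonempty (K i ≃ L (φ i))

/-- The essential rank of an operation: least cardinality of a support set. -/
noncomputable def essRank {F K : Type u} (f : (K → F) → F) : Cardinal.{u} :=
  sInf {c : Cardinal.{u} | ∃ A ∈ supp f, Cardinal.mk A = c}

/-- `P` is free on the family `b : X → P`. -/
def IsFreeOn {I : Type u} {K : I → Type u} (P : Alg K) {X : Type u}
    (b : X → P.carrier) : Prop :=
  ∀ (A : Alg K) (α : X → A.carrier), ∃! h : HomOfAlg K P A, h.toFun ∘ b = α

/-- `P` is a free algebra (on some basis). -/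
def IsFree {I : Type u} {K : I → Type u} (P : Alg K) : Prop :=
  ∃ (X : Type u) (b : X → P.carrier), IsFreeOn P b

/-- `P` is free of rank 1: free on a single generator. -/
def IsFreeRank1 {I : Type u} {K : I → Type u} (P : Alg K) : Prop :=
  ∃ p : P.carrier, ∀ (A : Alg K) (a : A.carrier),
    ∃! h : HomOfAlg K P A, h.toFun p = a

open CategoryTheory

namespace AlgAux
open CategoryTheory

variable {I : Type u} {K : I → Type u}

lemma comp_toFun {A B C : Alg K} (f : A ⟶ B) (g : B ⟶ C) :
    HomOfAlg.toFun (f ≫ g) = g.toFun ∘ f.toFun := rfl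

lemma id_toFun (A : Alg K) : HomOfAlg.toFun (𝟙 A) = id := rfl

lemma hom_ext {A B : Alg K} {f g : A ⟶ B} (h : HomOfAlg.toFun f = HomOfAlg.toFun g) :
    f = g := HomOfAlg.ext h

/-- `extendHom` as a homomorphism out of the term algebra. -/
def extHom {X : Type u} {A : Alg K} (α : X → A.carrier) : TermAlg K X ⟶ A :=
  ⟨extendHom α, fun _ _ => rfl⟩

@[simp] lemma extHom_toFun {X : Type u} {A : Alg K} (α : X → A.carrier) :
    HomOfAlg.toFun (extHom α) = extendHom α := rfl

@[simp] lemma extendHom_var {X : Type u} {A : Alg K} (α : X → A.carrier) (x : X) :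
    extendHom α (AlgTerm.var x) = α x := rfl

@[simp] lemma extendHom_op {X : Type u} {A : Alg K} (α : X → A.carrier) (i : I)
    (β : K i → AlgTerm K X) :
    extendHom α (AlgTerm.op i β) = A.op i (fun k => extendHom α (β k)) := rfl

lemma hom_toFun_eq_extend {X : Type u} {A : Alg K} (h : TermAlg K X ⟶ A) (t : AlgTerm K X) :
    h.toFun t = extendHom (fun x => h.toFun (AlgTerm.var x)) t := by
  induction t with
  | var x => rfl
  | op i β ih =>
      have h1 : h.toFun (AlgTerm.op i β) = A.op i (fun k => h.toFun (β k)) := h.map_op i β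
      rw [h1, extendHom_op]
      congr 1; funext k; exact ih k

/-- Homs out of a term algebra agreeing on variables are equal. -/
lemma term_hom_ext {X : Type u} {A : Alg K} {h₁ h₂ : TermAlg K X ⟶ A}
    (h : ∀ x, HomOfAlg.toFun h₁ (AlgTerm.var x) = HomOfAlg.toFun h₂ (AlgTerm.var x)) :
    h₁ = h₂ := by
  apply hom_ext; funext t
  rw [hom_toFun_eq_extend h₁ t, hom_toFun_eq_extend h₂ t]
  congr 1; funext x; exact h x

lemma freeOn_term (X : Type u) : IsFreeOn (TermAlg K X) AlgTerm.var := by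
  intro A α
  refine ⟨extHom α, rfl, ?_⟩
  intro y hy
  apply term_hom_ext
  intro x
  exact congrFun hy x

lemma freeRank1_term : IsFreeRank1 (TermAlg K PUnit) := by
  refine ⟨AlgTerm.var PUnit.unit, ?_⟩
  intro A a
  refine ⟨extHom (fun _ => a), rfl, ?_⟩
  intro y hy
  apply term_hom_ext
  intro x
  cases x
  exact hy

/-- Occurrence of a variable in a term. -/
inductive Occurs {X : Type u} : X → AlgTerm K X → Prop
  | var (x : X) : Occurs x (AlgTerm.var x)
  | op {x : X} {i : I} {β : K i → AlgTerm K X} (k : K i) :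
      Occurs x (β k) → Occurs x (AlgTerm.op i β)

lemma extend_agree {X : Type u} {A : Alg K} {σ₁ σ₂ : X → A.carrier} (t : AlgTerm K X)
    (h : ∀ v, Occurs v t → σ₁ v = σ₂ v) : extendHom σ₁ t = extendHom σ₂ t := by
  induction t with
  | var x => exact h x (Occurs.var x)
  | op i β ih =>
      rw [extendHom_op, extendHom_op]
      congr 1; funext k
      exact ih k (fun v hv => h v (Occurs.op k hv))

/-- Substitution of terms for variables. -/
def substT {X W : Type u} (σ : X → AlgTerm K W) (t : AlgTerm K X) : AlgTerm K W :=
  extendHom (A := TermAlg K W) σ t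

@[simp] lemma substT_var {X W : Type u} (σ : X → AlgTerm K W) (x : X) :
    substT σ (AlgTerm.var x) = σ x := rfl

@[simp] lemma substT_op {X W : Type u} (σ : X → AlgTerm K W) (i : I) (β : K i → AlgTerm K X) :
    substT σ (AlgTerm.op i β) = AlgTerm.op i (fun k => substT σ (β k)) := rfl

lemma op_inj {X : Type u} {i : I} {β γ : K i → AlgTerm K X}
    (h : AlgTerm.op i β = AlgTerm.op i γ) : β = γ := by
  have := (AlgTerm.op.injEq _ _ _ _).mp h
  exact eq_of_heq this.2

lemma subst_fix_var {X : Type u} {σ : X → AlgTerm K X} {v : X} :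
    ∀ {t : AlgTerm K X}, Occurs v t → substT σ t = t → σ v = AlgTerm.var v := by
  intro t hv
  induction hv with
  | var => intro h; exact h
  | op k hk ih =>
      intro h
      rw [substT_op] at h
      exact ih (congrFun (op_inj h) k)

end AlgAux

namespace CatAux
open CategoryTheory

universe v₁ v₂ u₁ u₂
variable {C : Type u₁} [Category.{v₁} C] {D : Type u₂} [Category.{v₂} D]

/-- Categorical surjectivity: every mono through which the morphism factors is iso. -/
def CSurj {X Y : C} (e : X ⟶ Y) : Prop :=
  ∀ (Z : C) (q : X ⟶ Z) (m : Z ⟶ Y), Mono m → e = q ≫ m → IsIso m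

def CGen (G : C) : Prop :=
  ∀ (A B : C) (f g : A ⟶ B), (∀ h : G ⟶ A, h ≫ f = h ≫ g) → f = g

def CProj (P : C) : Prop :=
  ∀ (A B : C) (e : A ⟶ B) (f : P ⟶ B), CSurj e → ∃ g : P ⟶ A, g ≫ e = f

def Psi (P : C) : Prop :=
  CProj P ∧ CGen P ∧
    ∀ (Q : C) (e : P ⟶ Q) (s : Q ⟶ P), s ≫ e = 𝟙 Q → CGen Q → IsIso e

variable (E : C ≌ D)

lemma cgen_map {G : C} (hG : CGen G) : CGen (E.functor.obj G) := by
  intro A B f g hyp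
  have hS : E.inverse.map f = E.inverse.map g := by
    apply hG
    intro h'
    have h1 := hyp (E.functor.map h' ≫ E.counit.app A)
    have n1 : E.counit.app A ≫ f = E.functor.map (E.inverse.map f) ≫ E.counit.app B :=
      (E.counit.naturality f).symm
    have n2 : E.counit.app A ≫ g = E.functor.map (E.inverse.map g) ≫ E.counit.app B :=
      (E.counit.naturality g).symm
    rw [Category.assoc, Category.assoc, n1, n2, ← Category.assoc, ← Category.assoc,
      ← E.functor.map_comp, ← E.functor.map_comp] at h1
    have h2 := (cancel_mono (E.counit.app B)).mp h1
    exact E.functor.map_injective h2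
  calc f = (E.counitInv.app A ≫ E.counit.app A) ≫ f := by simp
    _ = E.counitInv.app A ≫ E.functor.map (E.inverse.map f) ≫ E.counit.app B := by
        rw [Category.assoc]; congr 1; exact (E.counit.naturality f).symm
    _ = E.counitInv.app A ≫ E.functor.map (E.inverse.map g) ≫ E.counit.app B := by rw [hS]
    _ = (E.counitInv.app A ≫ E.counit.app A) ≫ g := by
        rw [Category.assoc]; congr 1; exact E.counit.naturality g
    _ = g := by simp

lemma csurj_inv_map {A B : D} (ε : A ⟶ B) (hε : CSurj ε) : CSurj (E.inverse.map ε) := by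
  intro Z q m hm hfact
  have hm' : Mono (E.functor.map m) := inferInstance
  have hmono : Mono (E.functor.map m ≫ E.counit.app B) := mono_comp _ _
  have hfact' : ε = (E.counitInv.app A ≫ E.functor.map q) ≫ (E.functor.map m ≫ E.counit.app B) := by
    have hnat : E.functor.map (E.inverse.map ε) ≫ E.counit.app B = E.counit.app A ≫ ε := by
      exact E.counit.naturality ε
    calc ε = E.counitInv.app A ≫ E.counit.app A ≫ ε := by simp
      _ = E.counitInv.app A ≫ E.functor.map (E.inverse.map ε) ≫ E.counit.app B := by rw [hnat]
      _ = _ := by rw [hfact, E.functor.map_comp]; simp [Category.assoc]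
  have hiso : IsIso (E.functor.map m ≫ E.counit.app B) :=
    hε _ (E.counitInv.app A ≫ E.functor.map q) _ hmono hfact'
  have : IsIso (E.functor.map m) := by
    have : E.functor.map m = (E.functor.map m ≫ E.counit.app B) ≫ E.counitInv.app B := by simp
    rw [this]; infer_instance
  exact isIso_of_fully_faithful E.functor m

lemma cproj_map {P : C} (hP : CProj P) : CProj (E.functor.obj P) := by
  intro A B ε f hε
  obtain ⟨ℓ, hℓ⟩ := hP (E.inverse.obj A) (E.inverse.obj B) (E.inverse.map ε)
    (E.unit.app P ≫ E.inverse.map f) (csurj_inv_map E ε hε)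
  refine ⟨E.functor.map ℓ ≫ E.counit.app A, ?_⟩
  rw [Category.assoc]
  have n : E.counit.app A ≫ ε = E.functor.map (E.inverse.map ε) ≫ E.counit.app B :=
    (E.counit.naturality ε).symm
  rw [n, ← Category.assoc, ← E.functor.map_comp, hℓ, E.functor.map_comp, Category.assoc]
  have n2 : E.functor.map (E.inverse.map f) ≫ E.counit.app B
      = E.counit.app (E.functor.obj P) ≫ f := E.counit.naturality f
  rw [n2, ← Category.assoc, E.functor_unitIso_comp, Category.id_comp]

lemma isIso_of_map_isIso {X Y : C} (m : X ⟶ Y) (h : IsIso (E.functor.map m)) : IsIso m :=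
  isIso_of_fully_faithful E.functor m

lemma psi_map {P : C} (hP : Psi P) : Psi (E.functor.obj P) := by
  obtain ⟨hproj, hgen, hmin⟩ := hP
  refine ⟨cproj_map E hproj, cgen_map E hgen, ?_⟩
  intro Q e s hse hQ
  have hse' : (E.inverse.map s ≫ E.unitInv.app P) ≫ (E.unit.app P ≫ E.inverse.map e) = 𝟙 _ := by
    rw [Category.assoc, ← Category.assoc (E.unitInv.app P), Iso.inv_hom_id_app,
      Category.id_comp, ← E.inverse.map_comp, hse, E.inverse.map_id]
  have hQ' : CGen (E.inverse.obj Q) := cgen_map E.symm hQ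
  have hiso : IsIso (E.unit.app P ≫ E.inverse.map e) :=
    hmin _ (E.unit.app P ≫ E.inverse.map e) (E.inverse.map s ≫ E.unitInv.app P) hse' hQ'
  have : IsIso (E.inverse.map e) := by
    have h2 : E.inverse.map e = E.unitInv.app P ≫ (E.unit.app P ≫ E.inverse.map e) := by simp
    rw [h2]; infer_instance
  have : IsIso (E.symm.functor.map e) := this
  exact isIso_of_fully_faithful E.symm.functor e

end CatAux

namespace AlgAux
open CategoryTheory CatAux

variable {I : Type u} {K : I → Type u}

/-- The free algebra on one generator. -/
abbrev F1 (K : I → Type u) : Alg K := TermAlg K PUnit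

noncomputable def constHom {A : Alg K} (a : A.carrier) : F1 K ⟶ A :=
  extHom (fun _ => a)

@[simp] lemma constHom_var {A : Alg K} (a : A.carrier) :
    HomOfAlg.toFun (constHom a) (AlgTerm.var PUnit.unit) = a := rfl

lemma f1_hom_ext {A : Alg K} {h₁ h₂ : F1 K ⟶ A}
    (h : HomOfAlg.toFun h₁ (AlgTerm.var PUnit.unit) = HomOfAlg.toFun h₂ (AlgTerm.var PUnit.unit)) :
    h₁ = h₂ :=
  term_hom_ext (fun x => by cases x; exact h)

lemma mono_iff_injective {A B : Alg K} (m : A ⟶ B) :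
    Mono m ↔ Function.Injective m.toFun := by
  constructor
  · intro hm a₁ a₂ ha
    have h1 : constHom a₁ ≫ m = constHom a₂ ≫ m := f1_hom_ext (by show m.toFun a₁ = m.toFun a₂; exact ha)
    have := (cancel_mono m).mp h1
    have := congrArg (fun (f : F1 K ⟶ A) => HomOfAlg.toFun f (AlgTerm.var PUnit.unit)) this
    simpa using this
  · intro hinj
    constructor
    intro Z f g hfg
    apply hom_ext; funext z
    exact hinj (congrFun (congrArg HomOfAlg.toFun hfg) z)

lemma isIso_iff_bijective {A B : Alg K} (h : A ⟶ B) :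
    IsIso h ↔ Function.Bijective h.toFun := by
  constructor
  · intro hi
    obtain ⟨g, hg1, hg2⟩ := hi.out
    have hgh : g.toFun ∘ h.toFun = id := by
      have := congrArg HomOfAlg.toFun hg1
      rwa [comp_toFun, id_toFun] at this
    have hhg : h.toFun ∘ g.toFun = id := by
      have := congrArg HomOfAlg.toFun hg2
      rwa [comp_toFun, id_toFun] at this
    refine ⟨?_, ?_⟩
    · intro a₁ a₂ ha
      have h1 : g.toFun (h.toFun a₁) = a₁ := congrFun hgh a₁
      have h2 : g.toFun (h.toFun a₂) = a₂ := congrFun hgh a₂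
      rw [← h1, ← h2, ha]
    · intro b
      exact ⟨g.toFun b, congrFun hhg b⟩
  · intro hb
    let e := Equiv.ofBijective h.toFun hb
    refine ⟨⟨⟨e.symm, ?_⟩, ?_, ?_⟩⟩
    · intro i α
      apply hb.1
      show h.toFun (e.symm (B.op i α)) = _
      rw [show h.toFun (e.symm (B.op i α)) = e (e.symm (B.op i α)) from rfl, e.apply_symm_apply]
      rw [h.map_op]
      congr 1; funext k
      show _ = e (e.symm (α k))
      rw [e.apply_symm_apply]
    · apply hom_ext; funext a
      show e.symm (h.toFun a) = a
      exact e.symm_apply_apply a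
    · apply hom_ext; funext b
      show h.toFun (e.symm b) = b
      exact e.apply_symm_apply b

/-- Subalgebra on a closed subset. -/
def subAlg (A : Alg K) (N : Set A.carrier)
    (hN : ∀ i (β : K i → A.carrier), (∀ k, β k ∈ N) → A.op i β ∈ N) : Alg K :=
  ⟨{a // a ∈ N}, fun i β => ⟨A.op i (fun k => (β k).1), hN i _ (fun k => (β k).2)⟩⟩

def subIncl (A : Alg K) (N : Set A.carrier) (hN) : subAlg A N hN ⟶ A :=
  ⟨Subtype.val, fun _ _ => rfl⟩

lemma range_closed {A B : Alg K} (h : A ⟶ B) :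
    ∀ i (β : K i → B.carrier), (∀ k, β k ∈ Set.range h.toFun) → B.op i β ∈ Set.range h.toFun := by
  intro i β hβ
  choose a ha using hβ
  refine ⟨A.op i a, ?_⟩
  rw [h.map_op]
  congr 1; funext k; exact ha k

lemma csurj_iff_surjective {A B : Alg K} (e : A ⟶ B) :
    CSurj e ↔ Function.Surjective e.toFun := by
  constructor
  · intro hs
    set N := Set.range e.toFun with hNdef
    have hcl := range_closed e
    let hq : A ⟶ subAlg B N hcl := ⟨fun a => ⟨e.toFun a, ⟨a, rfl⟩⟩, by
      intro i α
      apply Subtype.ext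
      show e.toFun (A.op i α) = B.op i _
      rw [e.map_op]; rfl⟩
    have hmono : Mono (subIncl B N hcl) := by
      rw [mono_iff_injective]; exact Subtype.val_injective
    have hfac : e = hq ≫ subIncl B N hcl := hom_ext (funext fun a => rfl)
    have hiso := hs _ hq _ hmono hfac
    have hsurj := ((isIso_iff_bijective _).mp hiso).2
    intro b
    obtain ⟨⟨b', a, ha⟩, hb⟩ := hsurj b
    exact ⟨a, by rw [ha]; exact hb⟩
  · intro hsurj Z q m hm hfac
    rw [isIso_iff_bijective]
    refine ⟨(mono_iff_injective m).mp hm, ?_⟩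
    intro b
    obtain ⟨a, ha⟩ := hsurj b
    exact ⟨q.toFun a, by rw [← ha, hfac]; rfl⟩

lemma cgen_F1 : CGen (F1 K) := by
  intro A B f g hyp
  apply hom_ext; funext a
  have := congrArg (fun h => HomOfAlg.toFun h (AlgTerm.var PUnit.unit)) (hyp (constHom a))
  exact this

lemma cproj_F1 : CProj (F1 K) := by
  intro A B e f he
  have hsurj := (csurj_iff_surjective e).mp he
  obtain ⟨a, ha⟩ := hsurj (f.toFun (AlgTerm.var PUnit.unit))
  refine ⟨constHom a, f1_hom_ext ?_⟩
  show e.toFun a = _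
  rw [ha]

end AlgAux

namespace AlgAux
open CategoryTheory CatAux

variable {I : Type u} {K : I → Type u}

lemma psi3_F1 : ∀ (Q : Alg K) (e : F1 K ⟶ Q) (s : Q ⟶ F1 K), s ≫ e = 𝟙 Q → CGen Q → IsIso e := by
  intro Q e s hse hQ
  let c : F1 K ⟶ F1 K := e ≫ s
  let t : AlgTerm K PUnit := HomOfAlg.toFun c (AlgTerm.var PUnit.unit)
  have hes : ∀ q, HomOfAlg.toFun e (HomOfAlg.toFun s q) = q := by
    intro q
    exact congrFun (congrArg HomOfAlg.toFun hse) q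
  have hc : c = extHom (fun _ => t) := f1_hom_ext rfl
  have hcfun : HomOfAlg.toFun c = extendHom (fun _ : PUnit => t) := congrArg HomOfAlg.toFun hc
  have hfix : HomOfAlg.toFun c t = t := by
    show HomOfAlg.toFun s (HomOfAlg.toFun e (HomOfAlg.toFun s (HomOfAlg.toFun e (AlgTerm.var PUnit.unit)))) = t
    rw [hes]
    rfl
  by_cases hocc : Occurs PUnit.unit t
  · have hsub : substT (fun _ : PUnit => t) t = t := by
      show extendHom (A := TermAlg K PUnit) (fun _ : PUnit => t) t = t
      rw [← hcfun]; exact hfix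
    have ht : t = AlgTerm.var PUnit.unit := subst_fix_var hocc hsub
    have hc1 : c = 𝟙 (F1 K) := by
      rw [hc]
      apply f1_hom_ext
      show t = _
      rw [ht]; rfl
    exact ⟨s, hc1, hse⟩
  · exfalso
    have hclosed : ∀ v, ¬ Occurs v t := by intro v; cases v; exact hocc
    have key : ∀ h : Q ⟶ F1 K, h ≫ 𝟙 (F1 K) = h ≫ c := by
      intro h
      rw [Category.comp_id]
      let d : F1 K ⟶ F1 K := e ≫ h
      let m : AlgTerm K PUnit := HomOfAlg.toFun d (AlgTerm.var PUnit.unit)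
      have hd : HomOfAlg.toFun d = extendHom (fun _ : PUnit => m) :=
        congrArg HomOfAlg.toFun (f1_hom_ext rfl : d = extHom (fun _ => m))
      have hcd : c ≫ d = d := by
        show (e ≫ s) ≫ e ≫ h = e ≫ h
        rw [Category.assoc, ← Category.assoc s e h, hse, Category.id_comp]
      have hmt : HomOfAlg.toFun d t = m :=
        congrFun (congrArg HomOfAlg.toFun hcd) (AlgTerm.var PUnit.unit)
      have hmt2 : m = extendHom (A := F1 K) (fun _ : PUnit => m) t := by rw [← hd]; exact hmt.symm
      have hmeq : m = t := by
        rw [hmt2]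
        have : extendHom (A := F1 K) (fun _ : PUnit => m) t = extendHom (fun _ : PUnit => t) t :=
          extend_agree t (fun v hv => absurd hv (hclosed v))
        rw [this, ← hcfun]; exact hfix
      have hcm : HomOfAlg.toFun c m = m := by rw [hmeq]; exact hfix
      have hdc : d ≫ c = d := by
        apply f1_hom_ext
        show HomOfAlg.toFun c m = m
        exact hcm
      have hsd : h = s ≫ d := by
        show h = s ≫ e ≫ h
        rw [← Category.assoc, hse, Category.id_comp]
      rw [hsd, Category.assoc, hdc]
    have h1c : 𝟙 (F1 K) = c := hQ _ _ _ _ key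
    have : AlgTerm.var PUnit.unit = t :=
      congrFun (congrArg HomOfAlg.toFun h1c) (AlgTerm.var PUnit.unit)
    exact hocc (this ▸ Occurs.var PUnit.unit)

end AlgAux

namespace AlgAux
open CategoryTheory CatAux Classical

variable {I : Type u} {K : I → Type u} {Z : Type u}

def SubBasis (N : Set (AlgTerm K Z)) : Set (AlgTerm K Z) :=
  {t | t ∈ N ∧ ((∃ z, t = AlgTerm.var z) ∨ ∃ i β, t = AlgTerm.op i β ∧ ¬ ∀ k, β k ∈ N)}

noncomputable def subLift (N : Set (AlgTerm K Z)) {A : Alg K} (α : ↥(SubBasis N) → A.carrier) :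
    (t : AlgTerm K Z) → t ∈ N → A.carrier
  | AlgTerm.var z, h => α ⟨AlgTerm.var z, h, Or.inl ⟨z, rfl⟩⟩
  | AlgTerm.op i β, h =>
      if hk : ∀ k, β k ∈ N then A.op i (fun k => subLift N α (β k) (hk k))
      else α ⟨AlgTerm.op i β, h, Or.inr ⟨i, β, rfl, hk⟩⟩

lemma subLift_op_mem (N : Set (AlgTerm K Z)) {A : Alg K} (α : ↥(SubBasis N) → A.carrier)
    {i : I} {β : K i → AlgTerm K Z} (h : AlgTerm.op i β ∈ N) (hk : ∀ k, β k ∈ N) :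
    subLift N α (AlgTerm.op i β) h = A.op i (fun k => subLift N α (β k) (hk k)) := by
  rw [subLift]
  exact dif_pos hk

lemma subLift_op_notmem (N : Set (AlgTerm K Z)) {A : Alg K} (α : ↥(SubBasis N) → A.carrier)
    {i : I} {β : K i → AlgTerm K Z} (h : AlgTerm.op i β ∈ N) (hk : ¬ ∀ k, β k ∈ N) :
    subLift N α (AlgTerm.op i β) h = α ⟨AlgTerm.op i β, h, Or.inr ⟨i, β, rfl, hk⟩⟩ := by
  rw [subLift]
  exact dif_neg hk

theorem subFree (N : Set (AlgTerm K Z))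
    (hN : ∀ i (β : K i → (TermAlg K Z).carrier), (∀ k, β k ∈ N) → (TermAlg K Z).op i β ∈ N) :
    IsFreeOn (subAlg (TermAlg K Z) N hN)
      (fun x : ↥(SubBasis N) => (⟨x.1, x.2.1⟩ : (subAlg (TermAlg K Z) N hN).carrier)) := by
  intro A α
  refine ⟨⟨fun n => subLift N α n.1 n.2, ?_⟩, ?_, ?_⟩
  · intro i β'
    show subLift N α (AlgTerm.op i fun k => (β' k).1) _ = _
    refine (subLift_op_mem N α _ (fun k => (β' k).2)).trans ?_
    rfl
  · funext x
    show subLift N α x.1 x.2.1 = α x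
    obtain ⟨t, ht, hx⟩ := x
    rcases hx with ⟨z, hz⟩ | ⟨i, β, heq, hk⟩
    · subst hz
      exact congrArg α (Subtype.ext rfl)
    · subst heq
      rw [subLift_op_notmem N α ht hk]
  · intro y hy
    apply hom_ext
    funext n
    obtain ⟨t, ht⟩ := n
    show HomOfAlg.toFun y ⟨t, ht⟩ = subLift N α t ht
    induction t with
    | var z =>
        have := congrFun hy ⟨AlgTerm.var z, ht, Or.inl ⟨z, rfl⟩⟩
        exact this
    | op i β ih =>
        by_cases hk : ∀ k, β k ∈ N
        · have hval : (⟨AlgTerm.op i β, ht⟩ : (subAlg (TermAlg K Z) N hN).carrier)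
              = (subAlg (TermAlg K Z) N hN).op i (fun k => ⟨β k, hk k⟩) := Subtype.ext rfl
          rw [hval]; refine (y.map_op _ _).trans (Eq.trans ?_ (subLift_op_mem N α ht hk).symm)
          congr 1
          funext k
          exact ih k (hk k)
        · have := congrFun hy ⟨AlgTerm.op i β, ht, Or.inr ⟨i, β, rfl, hk⟩⟩
          rw [subLift_op_notmem N α ht hk]
          exact this

lemma freeOn_of_iso {A B : Alg K} {X : Type u} {b : X → A.carrier} (hA : IsFreeOn A b)
    (e : A ⟶ B) (he : IsIso e) : IsFreeOn B (fun x => e.toFun (b x)) := by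
  intro C α
  obtain ⟨h, hh, huniq⟩ := hA C α
  have hei : ∀ a, HomOfAlg.toFun (inv e) (e.toFun a) = a := by
    intro a
    exact congrFun (congrArg HomOfAlg.toFun (IsIso.hom_inv_id e)) a
  refine ⟨inv e ≫ h, ?_, ?_⟩
  · funext x
    show h.toFun (HomOfAlg.toFun (inv e) (e.toFun (b x))) = α x
    rw [hei]
    exact congrFun hh x
  · intro y hy
    have h1 : e ≫ y = h := huniq (e ≫ y) (funext fun x => congrFun hy x)
    rw [← h1, ← Category.assoc, IsIso.inv_hom_id, Category.id_comp]

lemma freeRank1_of_iso {A B : Alg K} (hA : IsFreeRank1 A) (e : A ⟶ B) (he : IsIso e) :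
    IsFreeRank1 B := by
  obtain ⟨p, hp⟩ := hA
  refine ⟨e.toFun p, ?_⟩
  intro C a
  obtain ⟨h, hh, huniq⟩ := hp C a
  have hei : ∀ a', HomOfAlg.toFun (inv e) (e.toFun a') = a' := by
    intro a'
    exact congrFun (congrArg HomOfAlg.toFun (IsIso.hom_inv_id e)) a'
  refine ⟨inv e ≫ h, ?_, ?_⟩
  · show h.toFun (HomOfAlg.toFun (inv e) (e.toFun p)) = a
    rw [hei]; exact hh
  · intro y hy
    have h1 : e ≫ y = h := huniq (e ≫ y) hy
    rw [← h1, ← Category.assoc, IsIso.inv_hom_id, Category.id_comp]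

theorem psi_freeRank1 {P : Alg K} (hP : Psi P) : IsFreeRank1 P := by
  obtain ⟨hproj, hgen, hmin⟩ := hP
  let e₀ : TermAlg K P.carrier ⟶ P := extHom id
  have hsurj : Function.Surjective (HomOfAlg.toFun e₀) := fun p => ⟨AlgTerm.var p, rfl⟩
  have hcs : CSurj e₀ := (csurj_iff_surjective e₀).mpr hsurj
  obtain ⟨ι, hι⟩ := hproj _ _ e₀ (𝟙 P) hcs
  have hli : ∀ p, HomOfAlg.toFun e₀ (HomOfAlg.toFun ι p) = p := by
    intro p
    exact congrFun (congrArg HomOfAlg.toFun hι) p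
  have hιinj : Function.Injective (HomOfAlg.toFun ι) := by
    intro p q hpq
    rw [← hli p, ← hli q, hpq]
  let N := Set.range (HomOfAlg.toFun ι)
  let j : P ⟶ subAlg (TermAlg K P.carrier) N (range_closed ι) :=
    ⟨fun p => ⟨HomOfAlg.toFun ι p, ⟨p, rfl⟩⟩, fun i α => Subtype.ext (ι.map_op i α)⟩
  have hjiso : IsIso j := by
    rw [isIso_iff_bijective]
    constructor
    · intro p q hpq
      exact hιinj (congrArg Subtype.val hpq)
    · rintro ⟨t, p, hp⟩
      exact ⟨p, Subtype.ext hp⟩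
  have hfree : IsFreeOn P
      (fun x : ↥(SubBasis N) => HomOfAlg.toFun (inv j) (⟨x.1, x.2.1⟩ :
        (subAlg (TermAlg K P.carrier) N (range_closed ι)).carrier)) :=
    freeOn_of_iso (subFree N (range_closed ι)) (inv j) inferInstance
  set b := fun x : ↥(SubBasis N) => HomOfAlg.toFun (inv j) (⟨x.1, x.2.1⟩ :
        (subAlg (TermAlg K P.carrier) N (range_closed ι)).carrier) with hbdef
  rcases isEmpty_or_nonempty ↥(SubBasis N) with hX | hX
  · exfalso
    let Bl : Alg K := ⟨ULift Bool, fun _ _ => ⟨true⟩⟩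
    let f : Bl ⟶ Bl := 𝟙 Bl
    let g : Bl ⟶ Bl := ⟨fun _ => ⟨true⟩, fun _ _ => rfl⟩
    have hfg : ∀ h : P ⟶ Bl, h ≫ f = h ≫ g := by
      intro h
      obtain ⟨h₀, hh₀, huniq⟩ := hfree Bl (fun x => isEmptyElim x)
      have e1 := huniq (h ≫ f) (funext fun x => isEmptyElim x)
      have e2 := huniq (h ≫ g) (funext fun x => isEmptyElim x)
      rw [e1, e2]
    have hfgeq : f = g := hgen _ _ f g hfg
    have h2 : (ULift.up false : ULift Bool) = ULift.up true :=
      congrFun (congrArg HomOfAlg.toFun hfgeq) ⟨false⟩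
    exact Bool.noConfusion (congrArg ULift.down h2)
  · obtain ⟨x₀⟩ := hX
    obtain ⟨eP, heP, _⟩ := hfree (F1 K) (fun _ => AlgTerm.var PUnit.unit)
    let s : F1 K ⟶ P := constHom (b x₀)
    have hse : s ≫ eP = 𝟙 (F1 K) := by
      apply f1_hom_ext
      show HomOfAlg.toFun eP (b x₀) = AlgTerm.var PUnit.unit
      exact congrFun heP x₀
    have hiso : IsIso (X := P) (Y := F1 K) eP := hmin (F1 K) eP s hse cgen_F1
    exact freeRank1_of_iso freeRank1_term (inv eP) inferInstance

end AlgAux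

namespace Bridge
open CategoryTheory CatAux AlgAux

variable {I J : Type u} {K : I → Type u} {L : J → Type u}
variable (E : Alg K ≌ Alg L)

noncomputable def P0 : Alg L := E.functor.obj (F1 K)

lemma freeRank1_P0 : IsFreeRank1 (P0 E) :=
  psi_freeRank1 (psi_map E ⟨cproj_F1, cgen_F1, psi3_F1⟩)

noncomputable def p0 : (P0 E).carrier := (freeRank1_P0 E).choose

lemma p0_spec : ∀ (A : Alg L) (a : A.carrier),
    ∃! h : HomOfAlg L (P0 E) A, h.toFun (p0 E) = a :=
  (freeRank1_P0 E).choose_spec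

lemma eval_inj {A : Alg L} {k₁ k₂ : P0 E ⟶ A}
    (h : HomOfAlg.toFun k₁ (p0 E) = HomOfAlg.toFun k₂ (p0 E)) : k₁ = k₂ :=
  ((p0_spec E A (HomOfAlg.toFun k₂ (p0 E))).unique h rfl)

/-- The hom `F1 → TermAlg K V` sending the generator to `t`. -/
noncomputable def hK {V : Type u} (t : AlgTerm K V) : F1 K ⟶ TermAlg K V :=
  extHom (fun _ => t)

@[simp] lemma hK_var {V : Type u} (t : AlgTerm K V) :
    HomOfAlg.toFun (hK t) (AlgTerm.var PUnit.unit) = t := rfl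

noncomputable def bV (V : Type u) : V → (E.functor.obj (TermAlg K V)).carrier :=
  fun v => HomOfAlg.toFun (E.functor.map (hK (AlgTerm.var v))) (p0 E)

theorem freeQ (V : Type u) : IsFreeOn (E.functor.obj (TermAlg K V)) (bV E V) := by
  intro A α
  have hk : ∀ v, ∃ k : HomOfAlg L (P0 E) A, k.toFun (p0 E) = α v :=
    fun v => (p0_spec E A (α v)).exists
  choose k hk using hk
  let ad := E.toAdjunction
  let σ : V → (E.inverse.obj A).carrier :=
    fun v => HomOfAlg.toFun (ad.homEquiv _ _ (k v)) (AlgTerm.var PUnit.unit)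
  let hhat : TermAlg K V ⟶ E.inverse.obj A := extHom σ
  let h : E.functor.obj (TermAlg K V) ⟶ A := (ad.homEquiv _ _).symm hhat
  have hprop : HomOfAlg.toFun h ∘ bV E V = α := by
    funext v
    show HomOfAlg.toFun (E.functor.map (hK (AlgTerm.var v)) ≫ h) (p0 E) = α v
    have e2 : E.functor.map (hK (AlgTerm.var v)) ≫ h
        = (ad.homEquiv _ _).symm (hK (AlgTerm.var v) ≫ hhat) :=
      (ad.homEquiv_naturality_left_symm _ _).symm
    have e3 : hK (AlgTerm.var v) ≫ hhat = ad.homEquiv _ _ (k v) := by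
      apply f1_hom_ext
      rfl
    rw [e2, e3]
    exact (congrArg (fun f => HomOfAlg.toFun f (p0 E)) ((ad.homEquiv _ _).symm_apply_apply (k v))).trans (hk v)
  refine ⟨h, hprop, ?_⟩
  intro y hy
  have key : ∀ v, HomOfAlg.toFun y (bV E V v) = HomOfAlg.toFun h (bV E V v) :=
    fun v => (congrFun hy v).trans (congrFun hprop v).symm
  have c1 : ∀ v, E.functor.map (hK (AlgTerm.var v)) ≫ y
      = E.functor.map (hK (AlgTerm.var v)) ≫ h :=
    fun v => eval_inj E (key v)
  have c2 : ad.homEquiv _ _ y = ad.homEquiv _ _ h := by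
    apply term_hom_ext
    intro v
    have h4 := congrArg (ad.homEquiv _ _) (c1 v)
    rw [ad.homEquiv_naturality_left, ad.homEquiv_naturality_left] at h4
    exact congrFun (congrArg HomOfAlg.toFun h4) (AlgTerm.var PUnit.unit)
  exact (ad.homEquiv _ _).injective c2

noncomputable def uV (V : Type u) : TermAlg L V ⟶ E.functor.obj (TermAlg K V) :=
  extHom (bV E V)

noncomputable def wV (V : Type u) : E.functor.obj (TermAlg K V) ⟶ TermAlg L V :=
  (freeQ E V (TermAlg L V) AlgTerm.var).exists.choose

lemma wV_b (V : Type u) (v : V) :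
    HomOfAlg.toFun (wV E V) (bV E V v) = AlgTerm.var v :=
  congrFun (freeQ E V (TermAlg L V) AlgTerm.var).exists.choose_spec v

lemma uw (V : Type u) : uV E V ≫ wV E V = 𝟙 (TermAlg L V) := by
  apply term_hom_ext
  intro v
  show HomOfAlg.toFun (wV E V) (HomOfAlg.toFun (uV E V) (AlgTerm.var v)) = AlgTerm.var v
  exact wV_b E V v

lemma wu (V : Type u) : wV E V ≫ uV E V = 𝟙 (E.functor.obj (TermAlg K V)) := by
  have h1 : HomOfAlg.toFun (wV E V ≫ uV E V) ∘ bV E V = bV E V := by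
    funext v
    show HomOfAlg.toFun (uV E V) (HomOfAlg.toFun (wV E V) (bV E V v)) = bV E V v
    rw [wV_b]
    rfl
  have h2 : HomOfAlg.toFun (𝟙 (E.functor.obj (TermAlg K V))) ∘ bV E V = bV E V := rfl
  exact (freeQ E V _ (bV E V)).unique h1 h2

lemma uw_fun (V : Type u) (t : AlgTerm L V) :
    HomOfAlg.toFun (wV E V) (HomOfAlg.toFun (uV E V) t) = t :=
  congrFun (congrArg HomOfAlg.toFun (uw E V)) t

lemma wu_fun (V : Type u) (x : (E.functor.obj (TermAlg K V)).carrier) :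
    HomOfAlg.toFun (uV E V) (HomOfAlg.toFun (wV E V) x) = x :=
  congrFun (congrArg HomOfAlg.toFun (wu E V)) x

noncomputable def Phi (V : Type u) (t : AlgTerm K V) : AlgTerm L V :=
  HomOfAlg.toFun (wV E V) (HomOfAlg.toFun (E.functor.map (hK t)) (p0 E))

lemma Phi_var (V : Type u) (v : V) : Phi E V (AlgTerm.var v) = AlgTerm.var v :=
  wV_b E V v

lemma Phi_bijective (V : Type u) : Function.Bijective (Phi E V) := by
  constructor
  · intro t₁ t₂ h
    have h1 := congrArg (HomOfAlg.toFun (uV E V)) h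
    simp only [Phi] at h1
    rw [wu_fun, wu_fun] at h1
    have h2 : E.functor.map (hK t₁) = E.functor.map (hK t₂) := eval_inj E h1
    have h3 : hK t₁ = hK t₂ := E.functor.map_injective h2
    have h4 := congrFun (congrArg HomOfAlg.toFun h3) (AlgTerm.var PUnit.unit)
    exact h4
  · intro r
    obtain ⟨kk, hkk⟩ := (p0_spec E _ (HomOfAlg.toFun (uV E V) r)).exists
    obtain ⟨k', hk'⟩ := E.functor.map_surjective kk
    refine ⟨HomOfAlg.toFun k' (AlgTerm.var PUnit.unit), ?_⟩
    have h5 : hK (HomOfAlg.toFun k' (AlgTerm.var PUnit.unit)) = k' := by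
      apply f1_hom_ext
      rfl
    show HomOfAlg.toFun (wV E V) _ = r
    rw [h5, hk', hkk, uw_fun]

lemma Phi_subst (V W : Type u) (σ : V → AlgTerm K W) (t : AlgTerm K V) :
    Phi E W (substT σ t) = substT (fun v => Phi E W (σ v)) (Phi E V t) := by
  let σh : TermAlg K V ⟶ TermAlg K W := extHom σ
  have e1 : hK (substT σ t) = hK t ≫ σh := by
    apply f1_hom_ext
    rfl
  have hA : E.functor.map σh ≫ wV E W = wV E V ≫ extHom (A := TermAlg L W) (fun v => Phi E W (σ v)) := by
    have h1 : HomOfAlg.toFun (E.functor.map σh ≫ wV E W) ∘ bV E V = fun v => Phi E W (σ v) := by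
      funext v
      show HomOfAlg.toFun (wV E W) (HomOfAlg.toFun (E.functor.map σh) (bV E V v)) = _
      have hcomp : hK (AlgTerm.var v) ≫ σh = hK (σ v) := by
        apply f1_hom_ext
        rfl
      have e5 : HomOfAlg.toFun (E.functor.map σh) (bV E V v)
          = HomOfAlg.toFun (E.functor.map (hK (σ v))) (p0 E) := by
        show HomOfAlg.toFun (E.functor.map (hK (AlgTerm.var v)) ≫ E.functor.map σh) (p0 E) = _
        rw [← E.functor.map_comp, hcomp]
      rw [e5]
      rfl
    have h2 : HomOfAlg.toFun (wV E V ≫ extHom (A := TermAlg L W) (fun v => Phi E W (σ v))) ∘ bV E V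
        = fun v => Phi E W (σ v) := by
      funext v
      show extendHom _ (HomOfAlg.toFun (wV E V) (bV E V v)) = _
      rw [wV_b]
      rfl
    exact (freeQ E V (TermAlg L W) (fun v => Phi E W (σ v))).unique h1 h2
  show HomOfAlg.toFun (wV E W) (HomOfAlg.toFun (E.functor.map (hK (substT σ t))) (p0 E)) = _
  rw [e1, E.functor.map_comp]
  have h6 := congrFun (congrArg HomOfAlg.toFun hA)
    (HomOfAlg.toFun (E.functor.map (hK t)) (p0 E))
  exact h6

end Bridge

namespace CloneAux
open AlgAux

variable {I J : Type u} {K : I → Type u} {L : J → Type u}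

def IsProj {V : Type u} (t : AlgTerm K V) : Prop := ∃ v, t = AlgTerm.var v

def EssIn {V : Type u} (t : AlgTerm K V) (v : V) : Prop :=
  ∃ (W : Type u) (σ₁ σ₂ : V → AlgTerm K W),
    (∀ u, u ≠ v → σ₁ u = σ₂ u) ∧ substT σ₁ t ≠ substT σ₂ t

lemma rename_ne {V W : Type u} {f g : V → W} {v : V} (hfg : f v ≠ g v) :
    ∀ {t : AlgTerm K V}, Occurs v t →
      substT (fun u => AlgTerm.var (f u)) t ≠ substT (fun u => AlgTerm.var (g u)) t := by
  intro t hv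
  induction hv with
  | var =>
      intro h
      simp only [substT_var] at h
      injection h with h'
      exact hfg h'
  | op k hk ih =>
      intro h
      simp only [substT_op] at h
      exact ih (congrFun (op_inj h) k)

lemma essIn_iff_occurs {V : Type u} (t : AlgTerm K V) (v : V) : EssIn t v ↔ Occurs v t := by
  classical
  constructor
  · rintro ⟨W, σ₁, σ₂, hagree, hne⟩
    by_contra hocc
    exact hne (extend_agree t (fun u hu => hagree u (fun h => hocc (h ▸ hu))))
  · intro hocc
    refine ⟨Option V, fun u => AlgTerm.var (some u),
      fun u => AlgTerm.var (if u = v then none else some u), ?_, ?_⟩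
    · intro u hu
      show AlgTerm.var (K := K) (some u) = AlgTerm.var (if u = v then none else some u)
      rw [if_neg hu]
    · have hne : (fun u => some u) v ≠ (fun u : V => if u = v then none else some u) v := by
        simp
      exact rename_ne (f := fun u => some u) (g := fun u => if u = v then none else some u)
        hne hocc

def IsBasicT {V : Type u} (t : AlgTerm K V) : Prop :=
  ∃ (i : I) (α : K i → V), Function.Bijective α ∧ t = AlgTerm.op i (fun l => AlgTerm.var (α l))

def CondA {V : Type u} (t : AlgTerm K V) : Prop := ¬ IsProj t

def CondB {V : Type u} (t : AlgTerm K V) : Prop :=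
  ∀ (W : Type u) (u : AlgTerm K W) (σ : W → AlgTerm K V),
    t = substT σ u → ¬ IsProj u → ∀ w, EssIn u w → IsProj (σ w)

def CondC1 {V : Type u} (t : AlgTerm K V) : Prop := ∀ v, EssIn t v

def CondC2 {V : Type u} (t : AlgTerm K V) : Prop :=
  ∀ (W : Type u) (u : AlgTerm K W) (δ : W → V),
    t = substT (fun w => AlgTerm.var (δ w)) u →
    ∀ w₁ w₂, EssIn u w₁ → EssIn u w₂ → δ w₁ = δ w₂ → w₁ = w₂

lemma children_var {V W : Type u} {i : I} {α : K i → V} {i' : I} {γ : K i' → AlgTerm K W}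
    {σ : W → AlgTerm K V}
    (ht : AlgTerm.op i (fun l => AlgTerm.var (α l)) = substT σ (AlgTerm.op i' γ)) :
    ∃ h : i' = i, ∀ l : K i, ∃ wl, γ (h ▸ l) = AlgTerm.var wl ∧ σ wl = AlgTerm.var (α l) := by
  rw [substT_op] at ht
  injection ht with hi hβ
  subst hi
  refine ⟨rfl, ?_⟩
  have hβ' := eq_of_heq hβ
  intro l
  have h2 : substT σ (γ l) = AlgTerm.var (α l) := (congrFun hβ' l).symm
  cases hγl : γ l with
  | var wl =>
      rw [hγl, substT_var] at h2
      exact ⟨wl, rfl, h2⟩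
  | op i2 β2 =>
      rw [hγl, substT_op] at h2
      exact nomatch h2

lemma basic_conds {V : Type u} {t : AlgTerm K V} (h : IsBasicT t) :
    CondA t ∧ CondB t ∧ CondC1 t ∧ CondC2 t := by
  obtain ⟨i, α, hbij, rfl⟩ := h
  refine ⟨?_, ?_, ?_, ?_⟩
  · rintro ⟨v, hv⟩
    exact nomatch hv
  · intro W u σ ht hnp w hw
    cases u with
    | var w' => exact absurd ⟨w', rfl⟩ hnp
    | op i' γ =>
        obtain ⟨hi, hch⟩ := children_var ht
        subst hi
        choose wl hwl1 hwl2 using hch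
        have hocc := (essIn_iff_occurs _ _).mp hw
        cases hocc with
        | op k hk =>
            rw [hwl1 k] at hk
            cases hk
            exact ⟨α k, hwl2 k⟩
  · intro v
    rw [essIn_iff_occurs]
    obtain ⟨l, hl⟩ := hbij.2 v
    subst hl
    exact Occurs.op l (Occurs.var (α l))
  · intro W u δ ht w₁ w₂ h1 h2 hδ
    cases u with
    | var w' => simp at ht
    | op i' γ =>
        obtain ⟨hi, hch⟩ := children_var ht
        subst hi
        choose wl hwl1 hwl2 using hch
        have hocc1 := (essIn_iff_occurs _ _).mp h1
        have hocc2 := (essIn_iff_occurs _ _).mp h2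
        obtain ⟨l₁, hl₁⟩ : ∃ l, w₁ = wl l := by
          cases hocc1 with
          | op k hk =>
              rw [hwl1 k] at hk
              cases hk
              exact ⟨k, rfl⟩
        obtain ⟨l₂, hl₂⟩ : ∃ l, w₂ = wl l := by
          cases hocc2 with
          | op k hk =>
              rw [hwl1 k] at hk
              cases hk
              exact ⟨k, rfl⟩
        subst hl₁; subst hl₂
        have e1 : AlgTerm.var (K := K) (δ (wl l₁)) = AlgTerm.var (δ (wl l₂)) := by
          rw [hδ]
        have e2 : AlgTerm.var (K := K) (α l₁) = AlgTerm.var (α l₂) := by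
          rw [← hwl2 l₁, ← hwl2 l₂]
          exact e1
        injection e2 with e3
        rw [hbij.1 e3]

lemma conds_basic {V : Type u} {t : AlgTerm K V}
    (hA : CondA t) (hB : CondB t) (hC1 : CondC1 t) (hC2 : CondC2 t) : IsBasicT t := by
  cases t with
  | var v => exact absurd ⟨v, rfl⟩ hA
  | op i β =>
      have ht : AlgTerm.op i β = substT β (AlgTerm.op i (AlgTerm.var : K i → AlgTerm K (K i))) := by
        rw [substT_op]
        rfl
      have hnp : ¬ IsProj (AlgTerm.op i (AlgTerm.var : K i → AlgTerm K (K i))) := by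
        rintro ⟨v, hv⟩
        exact nomatch hv
      have hocc : ∀ k : K i, EssIn (AlgTerm.op i (AlgTerm.var : K i → AlgTerm K (K i))) k :=
        fun k => (essIn_iff_occurs _ _).mpr (Occurs.op k (Occurs.var k))
      have hβ : ∀ k, IsProj (β k) := fun k => hB (K i) _ β ht hnp k (hocc k)
      choose α hα using hβ
      have ht2 : AlgTerm.op i β = AlgTerm.op i (fun l => AlgTerm.var (α l)) := by
        congr 1
        funext l
        exact hα l
      have htsub : AlgTerm.op i β
          = substT (fun w => AlgTerm.var (α w)) (AlgTerm.op i (AlgTerm.var : K i → AlgTerm K (K i))) := by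
        rw [substT_op]
        exact ht2
      refine ⟨i, α, ⟨?_, ?_⟩, ht2⟩
      · intro l₁ l₂ hll
        exact hC2 (K i) _ α htsub l₁ l₂ (hocc l₁) (hocc l₂) hll
      · intro v
        have hoc := (essIn_iff_occurs _ v).mp (hC1 v)
        rw [ht2] at hoc
        cases hoc with
        | op k hk =>
            cases hk
            exact ⟨k, rfl⟩

end CloneAux

namespace CloneAux
open AlgAux

variable {I J : Type u}

/-- A clone isomorphism between two types. -/
structure CIso (K : I → Type u) (L : J → Type u) where
  f : ∀ V : Type u, AlgTerm K V → AlgTerm L V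
  g : ∀ V : Type u, AlgTerm L V → AlgTerm K V
  gf : ∀ V t, g V (f V t) = t
  fg : ∀ V t, f V (g V t) = t
  fvar : ∀ (V : Type u) (v : V), f V (AlgTerm.var v) = AlgTerm.var v
  fsub : ∀ {V W : Type u} (σ : V → AlgTerm K W) (t : AlgTerm K V),
    f W (substT σ t) = substT (fun v => f W (σ v)) (f V t)

namespace CIso

variable {K : I → Type u} {L : J → Type u} (c : CIso K L)

lemma f_inj {V : Type u} : Function.Injective (c.f V) := by
  intro a b h
  rw [← c.gf V a, h, c.gf]

lemma gvar (V : Type u) (v : V) : c.g V (AlgTerm.var v) = AlgTerm.var v := by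
  rw [← c.fvar V v, c.gf]

lemma gsub {V W : Type u} (σ : V → AlgTerm L W) (t : AlgTerm L V) :
    c.g W (substT σ t) = substT (fun v => c.g W (σ v)) (c.g V t) := by
  apply c.f_inj
  rw [c.fg, c.fsub]
  have h1 : (fun v => c.f W ((fun v => c.g W (σ v)) v)) = σ := by
    funext v
    exact c.fg W (σ v)
  rw [h1, c.fg]

noncomputable def symm : CIso L K where
  f := c.g
  g := c.f
  gf := c.fg
  fg := c.gf
  fvar := c.gvar
  fsub := c.gsub

lemma proj_of {V : Type u} {t : AlgTerm K V} (h : IsProj t) : IsProj (c.f V t) := by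
  obtain ⟨v, rfl⟩ := h
  exact ⟨v, c.fvar V v⟩

lemma proj_rev {V : Type u} {t : AlgTerm K V} (h : IsProj (c.f V t)) : IsProj t := by
  have h2 := c.symm.proj_of h
  show IsProj t
  have : c.symm.f V (c.f V t) = t := c.gf V t
  rwa [this] at h2

lemma ess_of {V : Type u} {t : AlgTerm K V} {v : V} (h : EssIn t v) : EssIn (c.f V t) v := by
  obtain ⟨W, σ₁, σ₂, hag, hne⟩ := h
  refine ⟨W, fun u => c.f W (σ₁ u), fun u => c.f W (σ₂ u), ?_, ?_⟩
  · intro u hu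
    show c.f W (σ₁ u) = c.f W (σ₂ u)
    rw [hag u hu]
  · intro heq
    rw [← c.fsub, ← c.fsub] at heq
    exact hne (c.f_inj heq)

lemma ess_rev {V : Type u} {t : AlgTerm K V} {v : V} (h : EssIn (c.f V t) v) : EssIn t v := by
  have h2 := c.symm.ess_of h
  have h3 : c.symm.f V (c.f V t) = t := c.gf V t
  rwa [h3] at h2

lemma condB_of {V : Type u} {t : AlgTerm K V} (h : CondB t) : CondB (c.f V t) := by
  intro W u σ ht hnp w hess
  have ht' : t = substT (fun w => c.g V (σ w)) (c.g W u) := by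
    apply c.f_inj
    rw [c.fsub, c.fg]
    have h1 : (fun v => c.f V (c.g V (σ v))) = σ := funext fun v => c.fg V (σ v)
    rw [h1, ← ht]
  have hnp' : ¬ IsProj (c.g W u) := by
    intro hp
    have h5 := c.proj_of hp
    rw [c.fg] at h5
    exact hnp h5
  have hess' : EssIn (c.g W u) w := by
    apply c.ess_rev
    rw [c.fg]
    exact hess
  have hp := h W (c.g W u) (fun w => c.g V (σ w)) ht' hnp' w hess'
  have := c.proj_of hp
  rwa [c.fg] at this

lemma condC1_of {V : Type u} {t : AlgTerm K V} (h : CondC1 t) : CondC1 (c.f V t) :=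
  fun v => c.ess_of (h v)

lemma condC2_of {V : Type u} {t : AlgTerm K V} (h : CondC2 t) : CondC2 (c.f V t) := by
  intro W u δ ht w₁ w₂ h1 h2 hδ
  have ht' : t = substT (fun w => AlgTerm.var (δ w)) (c.g W u) := by
    apply c.f_inj
    rw [c.fsub, c.fg]
    have hσ : (fun v => c.f V (AlgTerm.var (K := K) (δ v))) = fun w => AlgTerm.var (K := L) (δ w) :=
      funext fun v => c.fvar V (δ v)
    rw [hσ, ← ht]
  have hess1 : EssIn (c.g W u) w₁ := by
    apply c.ess_rev
    rw [c.fg]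
    exact h1
  have hess2 : EssIn (c.g W u) w₂ := by
    apply c.ess_rev
    rw [c.fg]
    exact h2
  exact h W (c.g W u) δ ht' w₁ w₂ hess1 hess2 hδ

lemma condA_of {V : Type u} {t : AlgTerm K V} (h : CondA t) : CondA (c.f V t) :=
  fun hp => h (c.proj_rev hp)

lemma basic_of {V : Type u} {t : AlgTerm K V} (h : IsBasicT t) : IsBasicT (c.f V t) := by
  obtain ⟨hA, hB, hC1, hC2⟩ := basic_conds h
  exact conds_basic (c.condA_of hA) (c.condB_of hB) (c.condC1_of hC1) (c.condC2_of hC2)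

end CIso

/-- The basic term for an operation symbol. -/
def opT (K : I → Type u) (i : I) : AlgTerm K (K i) := AlgTerm.op i AlgTerm.var

lemma basic_opT (K : I → Type u) (i : I) : IsBasicT (opT K i) :=
  ⟨i, id, Function.bijective_id, rfl⟩

theorem ciso_equivType {K : I → Type u} {L : J → Type u} (c : CIso K L) : EquivType K L := by
  have hbasicK : ∀ i : I, IsBasicT (c.f (K i) (opT K i)) := fun i => c.basic_of (basic_opT K i)
  have hbasicL : ∀ j : J, IsBasicT (c.g (L j) (opT L j)) := fun j => c.symm.basic_of (basic_opT L j)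
  let φ : I → J := fun i => (hbasicK i).choose
  let α : ∀ i, L (φ i) → K i := fun i => (hbasicK i).choose_spec.choose
  have hα : ∀ i, Function.Bijective (α i) ∧
      c.f (K i) (opT K i) = AlgTerm.op (φ i) (fun l => AlgTerm.var (α i l)) :=
    fun i => (hbasicK i).choose_spec.choose_spec
  let ψ : J → I := fun j => (hbasicL j).choose
  let γ : ∀ j, K (ψ j) → L j := fun j => (hbasicL j).choose_spec.choose
  have hγ : ∀ j, Function.Bijective (γ j) ∧
      c.g (L j) (opT L j) = AlgTerm.op (ψ j) (fun k => AlgTerm.var (γ j k)) :=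
    fun j => (hbasicL j).choose_spec.choose_spec
  -- key computation: ψ (φ i) = i
  have key1 : ∀ i, ψ (φ i) = i := by
    intro i
    have e0 : AlgTerm.op (φ i) (fun l => AlgTerm.var (K := L) (α i l))
        = substT (fun l => AlgTerm.var (α i l)) (opT L (φ i)) := by
      rw [opT, substT_op]
      rfl
    have e1 : opT K i = substT (fun l => AlgTerm.var (α i l)) (c.g (L (φ i)) (opT L (φ i))) := by
      have := congrArg (c.g (K i)) (hα i).2
      rw [c.gf, e0, c.gsub] at this
      have hσ : (fun v => c.g (K i) (AlgTerm.var (K := L) (α i v)))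
          = fun l => AlgTerm.var (K := K) (α i l) := funext fun v => c.gvar _ _
      rwa [hσ] at this
    rw [(hγ (φ i)).2, substT_op] at e1
    -- e1 : opT K i = AlgTerm.op (ψ (φ i)) (...)
    rw [opT] at e1
    injection e1 with hi _
    exact hi.symm
  have key2 : ∀ j, φ (ψ j) = j := by
    intro j
    have e0 : AlgTerm.op (ψ j) (fun k => AlgTerm.var (K := K) (γ j k))
        = substT (fun k => AlgTerm.var (γ j k)) (opT K (ψ j)) := by
      rw [opT, substT_op]
      rfl
    have e1 : opT L j = substT (fun k => AlgTerm.var (γ j k)) (c.f (K (ψ j)) (opT K (ψ j))) := by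
      have := congrArg (c.f (L j)) (hγ j).2
      rw [c.fg, e0, c.fsub] at this
      have hσ : (fun v => c.f (L j) (AlgTerm.var (K := K) (γ j v)))
          = fun k => AlgTerm.var (K := L) (γ j k) := funext fun v => c.fvar _ _
      rwa [hσ] at this
    rw [(hα (ψ j)).2, substT_op] at e1
    rw [opT] at e1
    injection e1 with hj _
    exact hj.symm
  refine ⟨⟨φ, ψ, key1, key2⟩, ?_⟩
  intro i
  exact ⟨(Equiv.ofBijective (α i) (hα i).1).symm⟩

end CloneAux

/-- isomorphic categories of algebras come from equivalent types. -/
theorem iso_categories_implies_equivType {I J : Type u} (K : I → Type u) (L : J → Type u)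
    (h : ∃ (T : Functor (Alg K) (Alg L)) (S : Functor (Alg L) (Alg K)),
      T.comp S = Functor.id (Alg K) ∧ S.comp T = Functor.id (Alg L)) :
    EquivType K L := by
  obtain ⟨T, S, h1, h2⟩ := h
  let E : Alg K ≌ Alg L := CategoryTheory.Equivalence.mk T S (eqToIso h1.symm) (eqToIso h2)
  exact CloneAux.ciso_equivType
    { f := fun V t => Bridge.Phi E V t
      g := fun V => (Equiv.ofBijective (Bridge.Phi E V) (Bridge.Phi_bijective E V)).symm
      gf := fun V t => (Equiv.ofBijective _ (Bridge.Phi_bijective E V)).symm_apply_apply t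
      fg := fun V t => (Equiv.ofBijective _ (Bridge.Phi_bijective E V)).apply_symm_apply t
      fvar := Bridge.Phi_var E
      fsub := fun σ t => Bridge.Phi_subst E _ _ σ t }
end

section
/- If the concrete categories (A(Δ), s) and (A(Δ'), s) are concretely isomorphic, i.e., isomorphic via a functor commuting with the underlying set functors, then Δ and Δ' are equivalent types. -/
universe u

open CategoryTheory

namespace ConcreteIsoAux

variable {I J : Type u} {K : I → Type u} {L : J → Type u}

theorem eqToHom_type {X Y : Type u} (p : X = Y) : eqToHom p = cast p := by
  subst p; rfl

theorem op_congr {A B : Alg K} (e : B = A) (i : I) (α : K i → A.carrier) :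
    A.op i α = cast (congrArg Alg.carrier e)
      (B.op i fun k => cast (congrArg Alg.carrier e).symm (α k)) := by
  subst e; simp

/-- Carrier equality coming from concreteness of `T`. -/
theorem carrierEq (T : Functor (Alg K) (Alg L))
    (hTf : T.comp (forgetAlg L) = forgetAlg K) (A : Alg K) :
    (T.obj A).carrier = A.carrier :=
  congrArg (fun F : Functor (Alg K) (Type u) => F.obj A) hTf

/-- The `j`-th operation that `T` induces on (the carrier of) a `K`-algebra `A`. -/
def opOf (T : Functor (Alg K) (Alg L)) (hTf : T.comp (forgetAlg L) = forgetAlg K)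
    (j : J) (A : Alg K) (α : L j → A.carrier) : A.carrier :=
  cast (carrierEq T hTf A)
    ((T.obj A).op j fun l => cast (carrierEq T hTf A).symm (α l))

theorem map_toFun (T : Functor (Alg K) (Alg L))
    (hTf : T.comp (forgetAlg L) = forgetAlg K) {A B : Alg K} (f : A ⟶ B)
    (x : (T.obj A).carrier) :
    (T.map f).toFun x
      = cast (carrierEq T hTf B).symm (f.toFun (cast (carrierEq T hTf A) x)) := by
  have h := Functor.congr_hom hTf f
  have h' := types_congr_hom h x
  have key : ∀ {X Y Z W : Type u} (p : X = Y) (g : Y ⟶ Z) (q : Z = W) (y : X),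
      (eqToHom p ≫ g ≫ eqToHom q) y = cast q (g (cast p y)) := by
    intro X Y Z W p g q y; subst p; subst q; rfl
  exact h'.trans (key _ _ _ x)

theorem opOf_nat (T : Functor (Alg K) (Alg L))
    (hTf : T.comp (forgetAlg L) = forgetAlg K) {A B : Alg K} (f : HomOfAlg K A B)
    (j : J) (α : L j → A.carrier) :
    f.toFun (opOf T hTf j A α) = opOf T hTf j B (fun l => f.toFun (α l)) := by
  have hm : ∀ x, (T.map (f : A ⟶ B)).toFun x
      = cast (carrierEq T hTf B).symm (f.toFun (cast (carrierEq T hTf A) x)) :=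
    map_toFun T hTf (f : A ⟶ B)
  have hop := (T.map (f : A ⟶ B)).map_op j (fun l => cast (carrierEq T hTf A).symm (α l))
  calc f.toFun (opOf T hTf j A α)
      = f.toFun (cast (carrierEq T hTf A)
          ((T.obj A).op j fun l => cast (carrierEq T hTf A).symm (α l))) := rfl
    _ = cast (carrierEq T hTf B)
          ((T.map (f : A ⟶ B)).toFun
            ((T.obj A).op j fun l => cast (carrierEq T hTf A).symm (α l))) := by
          rw [hm]; simp
    _ = cast (carrierEq T hTf B)
          ((T.obj B).op j
            ((T.map (f : A ⟶ B)).toFun ∘ fun l => cast (carrierEq T hTf A).symm (α l))) := by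
          rw [hop]
    _ = opOf T hTf j B (fun l => f.toFun (α l)) := by
          show _ = cast (carrierEq T hTf B)
            ((T.obj B).op j fun l => cast (carrierEq T hTf B).symm (f.toFun (α l)))
          have hfun : ((T.map (f : A ⟶ B)).toFun ∘ fun l => cast (carrierEq T hTf A).symm (α l))
              = fun l => cast (carrierEq T hTf B).symm (f.toFun (α l)) := by
            funext l
            simp [Function.comp, hm]
          rw [hfun]

/-- The term representing the `j`-th induced operation. -/
def termOf (T : Functor (Alg K) (Alg L)) (hTf : T.comp (forgetAlg L) = forgetAlg K)
    (j : J) : AlgTerm K (L j) :=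
  opOf T hTf j (TermAlg K (L j)) AlgTerm.var

theorem opOf_eq (T : Functor (Alg K) (Alg L))
    (hTf : T.comp (forgetAlg L) = forgetAlg K) (j : J) (A : Alg K)
    (α : L j → A.carrier) :
    opOf T hTf j A α = extendHom α (termOf T hTf j) := by
  have h := opOf_nat T hTf (A := TermAlg K (L j)) (B := A)
      ⟨extendHom α, fun i β => rfl⟩ j AlgTerm.var
  have hv : (fun l => extendHom (A := A) α (AlgTerm.var l)) = α := rfl
  rw [hv] at h
  exact h.symm

/-- Expansion of an `L`-term into a `K`-term, replacing each `L`-operation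
by the `K`-term representing it. -/
def expand (t : ∀ j, AlgTerm K (L j)) {X : Type u} : AlgTerm L X → AlgTerm K X
  | .var x => .var x
  | .op j β => extendHom (A := TermAlg K X) (fun l => expand t (β l)) (t j)

theorem cast_extend (T : Functor (Alg K) (Alg L))
    (hTf : T.comp (forgetAlg L) = forgetAlg K) {X : Type u} (u : AlgTerm L X) :
    cast (carrierEq T hTf (TermAlg K X))
      (extendHom (A := T.obj (TermAlg K X))
        (fun x => cast (carrierEq T hTf (TermAlg K X)).symm (AlgTerm.var x)) u)
      = expand (termOf T hTf) u := by
  induction u with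
  | var x => simp [extendHom, expand]; exact (cast_cast ..).trans (cast_eq ..)
  | op j β ih =>
      show cast (carrierEq T hTf (TermAlg K X))
        ((T.obj (TermAlg K X)).op j fun l =>
          extendHom (fun x => cast (carrierEq T hTf (TermAlg K X)).symm (AlgTerm.var x))
            (β l)) = _
      rw [expand]; refine Eq.trans ?_ (opOf_eq T hTf j (TermAlg K X) _)
      show _ = cast (carrierEq T hTf (TermAlg K X))
        ((T.obj (TermAlg K X)).op j fun l =>
          cast (carrierEq T hTf (TermAlg K X)).symm (expand (termOf T hTf) (β l)))
      have hfun : (fun l =>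
            extendHom (A := T.obj (TermAlg K X))
              (fun x => cast (carrierEq T hTf (TermAlg K X)).symm (AlgTerm.var x)) (β l))
          = fun l => cast (carrierEq T hTf (TermAlg K X)).symm
              (expand (termOf T hTf) (β l)) := by
        funext l
        rw [← ih l]
        simp
      rw [hfun]

/-- The composite identity: the term of `S ∘ T` at `i` is the bare operation `i`. -/
theorem key (T : Functor (Alg K) (Alg L)) (S : Functor (Alg L) (Alg K))
    (hTf : T.comp (forgetAlg L) = forgetAlg K)
    (hSf : S.comp (forgetAlg K) = forgetAlg L)
    (hTS : T.comp S = Functor.id (Alg K)) (i : I) :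
    (AlgTerm.op i AlgTerm.var : AlgTerm K (K i)) =
      expand (termOf T hTf) (termOf S hSf i) := by
  set A := TermAlg K (K i) with hAdef
  have hA : S.obj (T.obj A) = A :=
    congrArg (fun F : Functor (Alg K) (Alg K) => F.obj A) hTS
  have h1 := op_congr hA i AlgTerm.var
  have h2 : A.op i AlgTerm.var
      = cast (carrierEq T hTf A)
        (opOf S hSf i (T.obj A) (fun k => cast (carrierEq T hTf A).symm (AlgTerm.var k))) := by
    rw [h1]
    show _ = cast (carrierEq T hTf A)
      (cast (carrierEq S hSf (T.obj A))
        ((S.obj (T.obj A)).op i fun k =>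
          cast (carrierEq S hSf (T.obj A)).symm
            (cast (carrierEq T hTf A).symm (AlgTerm.var k))))
    simp only [cast_cast]
    congr 1; exact congrArg _ (funext fun k => (cast_cast ..).symm)
  calc A.op i AlgTerm.var = A.op i AlgTerm.var := rfl
    _ = cast (carrierEq T hTf A)
        (opOf S hSf i (T.obj A) (fun k => cast (carrierEq T hTf A).symm (AlgTerm.var k))) := h2
    _ = cast (carrierEq T hTf A)
        (extendHom (A := T.obj A)
          (fun k => cast (carrierEq T hTf A).symm (AlgTerm.var k)) (termOf S hSf i)) := by
        rw [opOf_eq]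
    _ = (show A.carrier from expand (termOf T hTf) (termOf S hSf i)) := cast_extend T hTf _

/-- Head index of a term. -/
def headIdx {X : Type u} : AlgTerm K X → Option I
  | .var _ => none
  | .op i _ => some i

/-- The variables appearing as immediate (variable) arguments of the head operation. -/
def argVars {X : Type u} : AlgTerm K X → Set X
  | .var _ => ∅
  | .op _ β => {x | ∃ k, β k = .var x}

theorem extendHom_eq_var {X Y : Type u} (α : Y → AlgTerm K X) (u : AlgTerm K Y) (x : X)
    (h : extendHom (A := TermAlg K X) α u = .var x) :
    ∃ y, u = AlgTerm.var y ∧ α y = AlgTerm.var x := by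
  cases u with
  | var y => exact ⟨y, rfl, h⟩
  | op i β =>
      exfalso
      have : (TermAlg K X).op i (fun k => extendHom (A := TermAlg K X) α (β k))
          = AlgTerm.var x := h
      exact nomatch this

theorem expand_eq_var (t : ∀ j, AlgTerm K (L j))
    (ht : ∀ j, ∃ i γ, t j = AlgTerm.op i γ) {X : Type u} (u : AlgTerm L X) (x : X)
    (h : expand t u = .var x) : u = AlgTerm.var x := by
  cases u with
  | var y =>
      have : (AlgTerm.var y : AlgTerm K X) = AlgTerm.var x := h
      rw [AlgTerm.var.injEq] at this
      rw [this]
  | op j β =>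
      exfalso
      obtain ⟨i, γ, hγ⟩ := ht j
      have : extendHom (A := TermAlg K X) (fun l => expand t (β l)) (t j)
          = AlgTerm.var x := h
      rw [hγ] at this
      have h2 : (TermAlg K X).op i
          (fun k => extendHom (A := TermAlg K X) (fun l => expand t (β l)) (γ k))
          = AlgTerm.var x := this
      exact nomatch h2

/-- The purely combinatorial endgame. -/
theorem equiv_of_terms (t : ∀ j, AlgTerm K (L j)) (s : ∀ i, AlgTerm L (K i))
    (h1 : ∀ i, (AlgTerm.op i AlgTerm.var : AlgTerm K (K i)) = expand t (s i))
    (h2 : ∀ j, (AlgTerm.op j AlgTerm.var : AlgTerm L (L j)) = expand s (t j)) :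
    EquivType K L := by
  have ht : ∀ j, ∃ i γ, t j = AlgTerm.op i γ := by
    intro j
    cases htj : t j with
    | var y =>
        exfalso
        have := h2 j
        rw [htj] at this
        exact nomatch (show (AlgTerm.op j AlgTerm.var : AlgTerm L (L j))
          = AlgTerm.var y from this)
    | op i γ => exact ⟨i, γ, rfl⟩
  have hs : ∀ i, ∃ j δ, s i = AlgTerm.op j δ := by
    intro i
    cases hsi : s i with
    | var y =>
        exfalso
        have := h1 i
        rw [hsi] at this
        exact nomatch (show (AlgTerm.op i AlgTerm.var : AlgTerm K (K i))
          = AlgTerm.var y from this)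
    | op j δ => exact ⟨j, δ, rfl⟩
  choose a γ hγ using ht
  choose b δ hδ using hs
  have ht : ∀ j, ∃ i γ', t j = AlgTerm.op i γ' := fun j => ⟨a j, γ j, hγ j⟩
  have hs : ∀ i, ∃ j δ', s i = AlgTerm.op j δ' := fun i => ⟨b i, δ i, hδ i⟩
  have hkey1 : ∀ i, (AlgTerm.op i AlgTerm.var : AlgTerm K (K i)) =
      AlgTerm.op (a (b i)) (fun k =>
        extendHom (A := TermAlg K (K i)) (fun l => expand t (δ i l)) (γ (b i) k)) := by
    intro i
    rw [h1 i, hδ i]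
    show expand t (AlgTerm.op (b i) (δ i)) = _
    rw [show expand t (AlgTerm.op (b i) (δ i))
      = extendHom (A := TermAlg K (K i)) (fun l => expand t (δ i l)) (t (b i)) from rfl,
      hγ (b i)]
    rfl
  have hkey2 : ∀ j, (AlgTerm.op j AlgTerm.var : AlgTerm L (L j)) =
      AlgTerm.op (b (a j)) (fun l =>
        extendHom (A := TermAlg L (L j)) (fun k => expand s (γ j k)) (δ (a j) l)) := by
    intro j
    rw [h2 j, hγ j]
    show expand s (AlgTerm.op (a j) (γ j)) = _
    rw [show expand s (AlgTerm.op (a j) (γ j))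
      = extendHom (A := TermAlg L (L j)) (fun k => expand s (γ j k)) (s (a j)) from rfl,
      hδ (a j)]
    rfl
  have hab : ∀ i, a (b i) = i := by
    intro i
    have := congrArg headIdx (hkey1 i)
    simp only [headIdx, Option.some.injEq] at this
    exact this.symm
  have hba : ∀ j, b (a j) = j := by
    intro j
    have := congrArg headIdx (hkey2 j)
    simp only [headIdx, Option.some.injEq] at this
    exact this.symm
  have hsurjK : ∀ i (x : K i), ∃ l : L (b i), δ i l = AlgTerm.var x := by
    intro i x
    have hx : x ∈ argVars (AlgTerm.op i (AlgTerm.var : K i → AlgTerm K (K i))) := ⟨x, rfl⟩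
    rw [hkey1 i] at hx
    simp only [argVars, Set.mem_setOf_eq] at hx
    obtain ⟨k, hk⟩ := hx
    obtain ⟨l, _, hEl⟩ := extendHom_eq_var _ _ _ hk
    exact ⟨l, expand_eq_var t ht _ _ hEl⟩
  have hsurjL : ∀ j (y : L j), ∃ k : K (a j), γ j k = AlgTerm.var y := by
    intro j y
    have hy : y ∈ argVars (AlgTerm.op j (AlgTerm.var : L j → AlgTerm L (L j))) := ⟨y, rfl⟩
    rw [hkey2 j] at hy
    simp only [argVars, Set.mem_setOf_eq] at hy
    obtain ⟨l, hl⟩ := hy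
    obtain ⟨k, _, hGk⟩ := extendHom_eq_var _ _ _ hl
    exact ⟨k, expand_eq_var s hs _ _ hGk⟩
  refine ⟨⟨b, a, hab, hba⟩, fun i => ?_⟩
  show Nonempty (K i ≃ L (b i))
  apply Cardinal.eq.mp
  choose c hc using hsurjK i
  have hcinj : Function.Injective c := by
    intro x1 x2 hx
    have h1' := hc x1
    rw [hx, hc x2] at h1'
    exact (AlgTerm.var.injEq _ _ ▸ h1' : x2 = x1).symm
  choose d hd using hsurjL (b i)
  have hdinj : Function.Injective d := by
    intro y1 y2 hy
    have h1' := hd y1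
    rw [hy, hd y2] at h1'
    exact (AlgTerm.var.injEq _ _ ▸ h1' : y2 = y1).symm
  have le1 : Cardinal.mk (K i) ≤ Cardinal.mk (L (b i)) :=
    Cardinal.mk_le_of_injective hcinj
  have le2 : Cardinal.mk (L (b i)) ≤ Cardinal.mk (K (a (b i))) :=
    Cardinal.mk_le_of_injective hdinj
  rw [hab i] at le2
  exact le_antisymm le1 le2

end ConcreteIsoAux

/-- concretely isomorphic categories of algebras come from equivalent types. -/
theorem concrete_iso_implies_equivType {I J : Type u} (K : I → Type u) (L : J → Type u)
    (h : ∃ (T : Functor (Alg K) (Alg L)) (S : Functor (Alg L) (Alg K)),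
      T.comp S = Functor.id (Alg K) ∧ S.comp T = Functor.id (Alg L) ∧
      T.comp (forgetAlg L) = forgetAlg K) :
    EquivType K L := by
  obtain ⟨T, S, hTS, hST, hTf⟩ := h
  have hSf : S.comp (forgetAlg K) = forgetAlg L := by
    rw [← hTf, ← Functor.assoc, hST, Functor.id_comp]
  exact ConcreteIsoAux.equiv_of_terms
    (ConcreteIsoAux.termOf T hTf) (ConcreteIsoAux.termOf S hSf)
    (ConcreteIsoAux.key T S hTf hSf hTS)
    (ConcreteIsoAux.key S T hSf hTf hST)
end

section
/- If the categories A(Δ) and A(Δ') are isomorphic as abstract categories, then they are concretely isomorphic: there is an isomorphism of categories commuting (up to natural isomorphism) with the underlying set functors. -/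
universe u

open CategoryTheory

namespace IsoConcreteAux

variable {I : Type u} {K : I → Type u}

/-- The homomorphic extension of an assignment, as a morphism from the term algebra. -/
def homMk {X : Type u} {A : Alg K} (α : X → A.carrier) : TermAlg K X ⟶ A :=
  ⟨extendHom α, fun _ _ => rfl⟩

theorem hom_ext {X : Type u} {A : Alg K} {h₁ h₂ : TermAlg K X ⟶ A}
    (hv : ∀ x, h₁.toFun (AlgTerm.var x) = h₂.toFun (AlgTerm.var x)) : h₁ = h₂ := by
  apply HomOfAlg.ext
  funext t
  induction t with
  | var x => exact hv x
  | op i β ih =>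
      have e1 : h₁.toFun (AlgTerm.op i β) = A.op i (h₁.toFun ∘ β) := h₁.map_op i β
      have e2 : h₂.toFun (AlgTerm.op i β) = A.op i (h₂.toFun ∘ β) := h₂.map_op i β
      rw [e1, e2]
      congr 1
      funext k
      exact ih k

/-- The bijection between homs out of the free algebra on one generator and elements. -/
def carrierEquiv (A : Alg K) : (TermAlg K PUnit.{u+1} ⟶ A) ≃ A.carrier where
  toFun h := h.toFun (AlgTerm.var PUnit.unit)
  invFun a := homMk fun _ => a
  left_inv h := hom_ext fun x => by cases x; rfl
  right_inv a := rfl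

/-- The free algebra on one generator is a categorical generator. -/
theorem generator {A B : Alg K} {f g : A ⟶ B}
    (hfg : ∀ h : TermAlg K PUnit.{u+1} ⟶ A, h ≫ f = h ≫ g) : f = g := by
  apply HomOfAlg.ext
  funext a
  exact congrFun (congrArg HomOfAlg.toFun (hfg (homMk fun _ => a))) (AlgTerm.var PUnit.unit)

/-- A term is ground (essentially variable-free) if its evaluation does not depend on the
assignment of variables. -/
def Ground (t : AlgTerm K PUnit.{u+1}) : Prop :=
  ∀ (A : Alg K) (α β : PUnit.{u+1} → A.carrier), extendHom α t = extendHom β t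

theorem ground_of_subst {t : AlgTerm K PUnit.{u+1}} {i0 : I} {β0 : K i0 → AlgTerm K PUnit.{u+1}}
    (ht : t = AlgTerm.op i0 β0) :
    ∀ s : AlgTerm K PUnit.{u+1},
      extendHom (A := TermAlg K PUnit.{u+1}) (fun _ => t) s = s → Ground s := by
  intro s
  induction s with
  | var x =>
      intro hs
      have hs' : t = AlgTerm.var x := hs
      rw [ht] at hs'
      cases hs'
  | op i β ih =>
      intro hs
      have hs' : AlgTerm.op i
          (fun k => extendHom (A := TermAlg K PUnit.{u+1}) (fun _ => t) (β k))
          = AlgTerm.op i β := hs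
      have hβ : ∀ k, extendHom (A := TermAlg K PUnit.{u+1}) (fun _ => t) (β k) = β k := by
        injection hs' with hi hf
        intro k
        exact congrFun hf k
      intro A α α'
      show A.op i (fun k => extendHom α (β k)) = A.op i (fun k => extendHom α' (β k))
      congr 1
      funext k
      exact ih k (hβ k) A α α'

theorem hom_toFun_eq_extend {A : Alg K} (n : TermAlg K PUnit.{u+1} ⟶ A)
    (t : AlgTerm K PUnit.{u+1}) :
    n.toFun t = extendHom (fun _ => n.toFun (AlgTerm.var PUnit.unit)) t := by
  have h : homMk (A := A) (fun _ => n.toFun (AlgTerm.var PUnit.unit)) = n :=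
    hom_ext fun x => by cases x; rfl
  exact (congrFun (congrArg HomOfAlg.toFun h) t).symm

/-- `unopt` replaces the extra point by the variable. -/
def unopt (o : Option (AlgTerm K PUnit.{u+1})) : AlgTerm K PUnit.{u+1} :=
  o.getD (AlgTerm.var PUnit.unit)

/-- The term algebra on one generator with the generator "doubled": the new point `none`
behaves exactly like the variable under all operations. -/
def Dbl (K : I → Type u) : Alg K :=
  ⟨Option (AlgTerm K PUnit.{u+1}), fun i α => some (AlgTerm.op i fun k => unopt (α k))⟩

def uu : TermAlg K PUnit.{u+1} ⟶ Dbl K := homMk fun _ => some (AlgTerm.var PUnit.unit)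

def vv : TermAlg K PUnit.{u+1} ⟶ Dbl K := homMk fun _ => none

theorem unopt_uu : ∀ t : AlgTerm K PUnit.{u+1}, unopt ((uu (K := K)).toFun t) = t := by
  intro t
  induction t with
  | var x => cases x; rfl
  | op i β ih =>
      show AlgTerm.op i (fun k => unopt ((uu (K := K)).toFun (β k))) = AlgTerm.op i β
      congr 1
      funext k
      exact ih k

theorem unopt_vv : ∀ t : AlgTerm K PUnit.{u+1}, unopt ((vv (K := K)).toFun t) = t := by
  intro t
  induction t with
  | var x => cases x; rfl
  | op i β ih =>
      show AlgTerm.op i (fun k => unopt ((vv (K := K)).toFun (β k))) = AlgTerm.op i β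
      congr 1
      funext k
      exact ih k

theorem uu_op_eq_vv_op (i : I) (β : K i → AlgTerm K PUnit.{u+1}) :
    (uu (K := K)).toFun (AlgTerm.op i β) = (vv (K := K)).toFun (AlgTerm.op i β) := by
  have hfun : (fun k => unopt ((uu (K := K)).toFun (β k)))
      = (fun k => unopt ((vv (K := K)).toFun (β k))) := by
    funext k
    rw [unopt_uu, unopt_vv]
  show some (AlgTerm.op i fun k => unopt ((uu (K := K)).toFun (β k)))
      = some (AlgTerm.op i fun k => unopt ((vv (K := K)).toFun (β k)))
  rw [hfun]

/-- The main auxiliary result: any equivalence of categories of algebras commutes with the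
underlying set functors up to natural isomorphism. -/
theorem concrete {I J : Type u} (K : I → Type u) (L : J → Type u) (E : Alg K ≌ Alg L) :
    Nonempty (E.functor.comp (forgetAlg L) ≅ forgetAlg K) := by
  classical
  -- Step 1 : the image `Q` of the free algebra on one generator is a generator.
  have genQ : ∀ {A B : Alg L} (f g : A ⟶ B),
      (∀ h : E.functor.obj (TermAlg K PUnit.{u+1}) ⟶ A, h ≫ f = h ≫ g) → f = g := by
    intro A B f g hfg
    have hGf : E.inverse.map f = E.inverse.map g := by
      apply generator
      intro m
      have h3 := hfg (E.functor.map m ≫ E.counit.app A)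
      have h4 := congrArg (fun z => E.unit.app (TermAlg K PUnit.{u+1}) ≫ E.inverse.map z) h3
      simpa using h4
    exact E.inverse.map_injective hGf
  -- Step 2 : there is a hom `g0 : Q ⟶ F1L` hitting the variable.
  have hx : ∃ (g0 : E.functor.obj (TermAlg K PUnit.{u+1}) ⟶ TermAlg L PUnit.{u+1})
      (a : (E.functor.obj (TermAlg K PUnit.{u+1})).carrier),
      (g0.toFun a : AlgTerm L PUnit.{u+1}) = AlgTerm.var PUnit.unit := by
    by_contra hcon
    have hcon' : ∀ (g0 : E.functor.obj (TermAlg K PUnit.{u+1}) ⟶ TermAlg L PUnit.{u+1})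
        (b : (E.functor.obj (TermAlg K PUnit.{u+1})).carrier),
        (g0.toFun b : AlgTerm L PUnit.{u+1}) ≠ AlgTerm.var PUnit.unit := by
      intro g0 b hEq
      exact hcon ⟨g0, b, hEq⟩
    have huv : (uu (K := L)) = vv := by
      apply genQ
      intro h
      apply HomOfAlg.ext
      funext b
      show (uu (K := L)).toFun (h.toFun b) = (vv (K := L)).toFun (h.toFun b)
      cases hb : h.toFun b with
      | var x => cases x; exact absurd hb (hcon' h b)
      | op i β => exact uu_op_eq_vv_op i β
    have hbad : (some (AlgTerm.var PUnit.unit) : Option (AlgTerm L PUnit.{u+1})) = none :=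
      congrFun (congrArg HomOfAlg.toFun huv) (AlgTerm.var PUnit.unit)
    simp at hbad
  obtain ⟨g0, a, ha⟩ := hx
  -- Step 3 : `F1L` is a retract of `Q`, and the resulting idempotent is the identity.
  set s0 : TermAlg L PUnit.{u+1} ⟶ E.functor.obj (TermAlg K PUnit.{u+1}) :=
    homMk fun _ => a with hs0def
  have hsg : s0 ≫ g0 = 𝟙 (TermAlg L PUnit.{u+1}) := hom_ext fun x => by cases x; exact ha
  set m : TermAlg K PUnit.{u+1} ⟶ TermAlg K PUnit.{u+1} :=
    E.functor.preimage (g0 ≫ s0) with hmdef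
  have hFm : E.functor.map m = g0 ≫ s0 := E.functor.map_preimage _
  have hmm : m ≫ m = m := by
    apply E.functor.map_injective
    rw [CategoryTheory.Functor.map_comp, hFm, ← Category.assoc, Category.assoc g0 s0 g0, hsg,
      Category.comp_id]
  have hsubst : extendHom (fun _ => m.toFun (AlgTerm.var PUnit.unit))
      (m.toFun (AlgTerm.var PUnit.unit)) = m.toFun (AlgTerm.var PUnit.unit) := by
    have h5 : m.toFun (m.toFun (AlgTerm.var PUnit.unit)) = m.toFun (AlgTerm.var PUnit.unit) :=
      congrFun (congrArg HomOfAlg.toFun hmm) (AlgTerm.var PUnit.unit)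
    calc extendHom (fun _ => m.toFun (AlgTerm.var PUnit.unit)) (m.toFun (AlgTerm.var PUnit.unit))
        = m.toFun (m.toFun (AlgTerm.var PUnit.unit)) := (hom_toFun_eq_extend m _).symm
      _ = m.toFun (AlgTerm.var PUnit.unit) := h5
  have main : g0 ≫ s0 = 𝟙 (E.functor.obj (TermAlg K PUnit.{u+1})) := by
    cases htc : m.toFun (AlgTerm.var PUnit.unit) with
    | var x =>
        cases x
        have hmid : m = 𝟙 (TermAlg K PUnit.{u+1}) := hom_ext fun x => by cases x; exact htc
        rw [← hFm, hmid, CategoryTheory.Functor.map_id]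
    | op i β =>
        exfalso
        have hg : Ground (m.toFun (AlgTerm.var PUnit.unit)) :=
          ground_of_subst htc _ hsubst
        -- any two homs out of `F1L` coincide; contradiction with two distinct ones.
        have key : ∀ f1 f2 : TermAlg L PUnit.{u+1} ⟶ TermAlg L (ULift.{u} Bool), f1 = f2 := by
          intro f1 f2
          have hk : ∀ k : E.functor.obj (TermAlg K PUnit.{u+1}) ⟶ TermAlg L (ULift.{u} Bool),
              k = E.functor.map (E.functor.preimage
                    (k ≫ E.counitInv.app (TermAlg L (ULift.{u} Bool))))
                  ≫ E.counit.app (TermAlg L (ULift.{u} Bool)) := by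
            intro k
            rw [E.functor.map_preimage, Category.assoc]
            simp
          have hker : ∀ k1 k2 : E.functor.obj (TermAlg K PUnit.{u+1}) ⟶
              TermAlg L (ULift.{u} Bool), (g0 ≫ s0) ≫ k1 = (g0 ≫ s0) ≫ k2 := by
            intro k1 k2
            set n1 := E.functor.preimage (k1 ≫ E.counitInv.app (TermAlg L (ULift.{u} Bool)))
              with hn1
            set n2 := E.functor.preimage (k2 ≫ E.counitInv.app (TermAlg L (ULift.{u} Bool)))
              with hn2
            have hmn : m ≫ n1 = m ≫ n2 := by
              apply hom_ext
              intro x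
              cases x
              show n1.toFun (m.toFun (AlgTerm.var PUnit.unit))
                  = n2.toFun (m.toFun (AlgTerm.var PUnit.unit))
              exact (hom_toFun_eq_extend n1 _).trans ((hg _ _ _).trans (hom_toFun_eq_extend n2 _).symm)
            rw [hk k1, hk k2, ← hFm, ← Category.assoc, ← Category.assoc,
              ← CategoryTheory.Functor.map_comp, ← CategoryTheory.Functor.map_comp, hmn]
          have h6 := hker (g0 ≫ f1) (g0 ≫ f2)
          have h7 : g0 ≫ f1 = g0 ≫ f2 := by
            calc g0 ≫ f1 = (g0 ≫ s0) ≫ (g0 ≫ f1) := by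
                  rw [Category.assoc, ← Category.assoc s0 g0 f1, hsg, Category.id_comp]
              _ = (g0 ≫ s0) ≫ (g0 ≫ f2) := h6
              _ = g0 ≫ f2 := by
                  rw [Category.assoc, ← Category.assoc s0 g0 f2, hsg, Category.id_comp]
          calc f1 = (s0 ≫ g0) ≫ f1 := by rw [hsg, Category.id_comp]
            _ = s0 ≫ (g0 ≫ f1) := Category.assoc _ _ _
            _ = s0 ≫ (g0 ≫ f2) := by rw [h7]
            _ = (s0 ≫ g0) ≫ f2 := (Category.assoc _ _ _).symm
            _ = f2 := by rw [hsg, Category.id_comp]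
        have hEq := key (homMk fun _ => AlgTerm.var (ULift.up true))
          (homMk fun _ => AlgTerm.var (ULift.up false))
        have h2 : (AlgTerm.var (ULift.up true) : AlgTerm L (ULift.{u} Bool))
            = AlgTerm.var (ULift.up false) :=
          congrFun (congrArg HomOfAlg.toFun hEq) (AlgTerm.var PUnit.unit)
        simp at h2
  -- Step 4 : assemble the natural isomorphism.
  have hcomp_pre : ∀ {A A' : Alg K} (f : A ⟶ A')
      (k : E.functor.obj (TermAlg K PUnit.{u+1}) ⟶ E.functor.obj A),
      E.functor.preimage (k ≫ E.functor.map f) = E.functor.preimage k ≫ f := by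
    intro A A' f k
    apply E.functor.map_injective
    rw [CategoryTheory.Functor.map_comp, E.functor.map_preimage, E.functor.map_preimage]
  refine ⟨NatIso.ofComponents (fun A => Equiv.toIso
    ((((carrierEquiv (E.functor.obj A)).symm.trans
        ⟨fun h => g0 ≫ h, fun k => s0 ≫ k,
          fun h => by show s0 ≫ g0 ≫ h = h; rw [← Category.assoc, hsg, Category.id_comp],
          fun k => by show g0 ≫ s0 ≫ k = k; rw [← Category.assoc, main, Category.id_comp]⟩).trans
        ⟨E.functor.preimage, E.functor.map,
          fun k => E.functor.map_preimage k, fun n => E.functor.preimage_map n⟩).trans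
      (carrierEquiv A))) ?_⟩
  intro A A' f
  ext b
  show (E.functor.preimage (g0 ≫ homMk (fun _ => (E.functor.map f).toFun b))).toFun
        (AlgTerm.var PUnit.unit)
      = f.toFun ((E.functor.preimage (g0 ≫ homMk (fun _ => b))).toFun (AlgTerm.var PUnit.unit))
  have hhm : homMk (A := E.functor.obj A') (fun _ => (E.functor.map f).toFun b)
      = homMk (fun _ => b) ≫ E.functor.map f :=
    hom_ext fun (x : PUnit.{u+1}) => by cases x; rfl
  rw [hhm, ← Category.assoc, hcomp_pre]
  rfl

end IsoConcreteAux

/-- abstractly isomorphic categories of algebras are concretely isomorphic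
(the isomorphism commutes with underlying set functors up to natural isomorphism). -/
theorem iso_implies_concrete_iso {I J : Type u} (K : I → Type u) (L : J → Type u)
    (h : ∃ (T : Functor (Alg K) (Alg L)) (S : Functor (Alg L) (Alg K)),
      T.comp S = Functor.id (Alg K) ∧ S.comp T = Functor.id (Alg L)) :
    ∃ (T : Functor (Alg K) (Alg L)) (S : Functor (Alg L) (Alg K)),
      T.comp S = Functor.id (Alg K) ∧ S.comp T = Functor.id (Alg L) ∧
      Nonempty (T.comp (forgetAlg L) ≅ forgetAlg K) := by
  obtain ⟨T, S, h1, h2⟩ := h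
  exact ⟨T, S, h1, h2,
    IsoConcreteAux.concrete K L (CategoryTheory.Equivalence.mk T S (eqToIso h1.symm) (eqToIso h2))⟩
end

section
/- Let F be the absolutely free algebra on a set X of type Δ = (K_i)_{i∈I} with |X| ≥ |K_i| for all i, let Y = F \ X, and let S be the least equivalence relation on Y containing the relation R where y₁ R y₂ iff some endomorphism of F maps y₁ to y₂. Then the equivalence classes of S are exactly the sets φ(i) = { f_i(α) : α ∈ F^{K_i} } for i ∈ I, and i ↦ φ(i) is a bijection from I to Y/S. -/
universe u

open CategoryTheory

/-- A term which is not a variable. -/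
def IsNonVar {I : Type u} {K : I → Type u} {X : Type u} (t : AlgTerm K X) : Prop :=
  ∀ x : X, t ≠ AlgTerm.var x

/-- The relation `y₁ R y₂` on non-variables: some endomorphism of `F` maps `y₁` to `y₂`. -/
def EndoRel {I : Type u} (K : I → Type u) (X : Type u) (t₁ t₂ : AlgTerm K X) : Prop :=
  IsNonVar t₁ ∧ IsNonVar t₂ ∧
    ∃ σ : HomOfAlg K (TermAlg K X) (TermAlg K X), σ.toFun t₁ = t₂

/-- the equivalence classes of the equivalence relation generated by `R` on
`Y = F \ X` are exactly the sets `φ(i) = {f_i(α)}`, and `i ↦ φ(i)` is injective (hence a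
bijection onto the set of classes). -/
theorem eqvGen_classes_eq_operations {I : Type u} (K : I → Type u) (X : Type u)
    (hX : ∀ i, Nonempty (K i ↪ X)) :
    (∀ t₁ t₂ : AlgTerm K X, IsNonVar t₁ → IsNonVar t₂ →
      (Relation.EqvGen (EndoRel K X) t₁ t₂ ↔
        ∃ i, (∃ α, t₁ = AlgTerm.op i α) ∧ (∃ β, t₂ = AlgTerm.op i β))) ∧
    Function.Injective
      (fun i : I => {t : AlgTerm K X | ∃ α : K i → AlgTerm K X, t = AlgTerm.op i α}) := by
  classical
  -- For each `i` and target tuple `γ`, the endomorphism sending the canonical term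
  -- `op i (var ∘ e)` to `op i γ`.
  have nonvar_op : ∀ (i : I) (α : K i → AlgTerm K X), IsNonVar (AlgTerm.op i α) := by
    intro i α x h; cases h
  have canonRel : ∀ (i : I) (γ : K i → AlgTerm K X),
      EndoRel K X (AlgTerm.op i fun k => AlgTerm.var ((hX i).some k)) (AlgTerm.op i γ) := by
    intro i γ
    set e := (hX i).some with he
    set g : X → AlgTerm K X :=
      fun x => if h : ∃ k, e k = x then γ h.choose else AlgTerm.var x with hg
    refine ⟨nonvar_op _ _, nonvar_op _ _,
      ⟨extendHom (A := TermAlg K X) g, fun j δ => rfl⟩, ?_⟩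
    show AlgTerm.op i (fun k => extendHom (A := TermAlg K X) g (AlgTerm.var (e k)))
      = AlgTerm.op i γ
    congr 1
    funext k
    show (if h : ∃ k', e k' = e k then γ h.choose else AlgTerm.var (e k)) = γ k
    have hk : ∃ k', e k' = e k := ⟨k, rfl⟩
    rw [dif_pos hk]
    congr 1
    exact e.injective hk.choose_spec
  constructor
  · intro t₁ t₂ h₁ h₂
    constructor
    · intro h
      have key : ∀ a b : AlgTerm K X, Relation.EqvGen (EndoRel K X) a b →
          a = b ∨ ∃ i α β, a = AlgTerm.op i α ∧ b = AlgTerm.op i β := by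
        intro a b h
        induction h with
        | rel a b hab =>
          obtain ⟨ha, hb, σ, hσ⟩ := hab
          cases a with
          | var x => exact absurd rfl (ha x)
          | op i α =>
            exact Or.inr ⟨i, α, σ.toFun ∘ α, rfl, by rw [← hσ]; exact σ.map_op i α⟩
        | refl a => exact Or.inl rfl
        | symm a b _ ih =>
          rcases ih with rfl | ⟨i, α, β, rfl, rfl⟩
          · exact Or.inl rfl
          · exact Or.inr ⟨i, β, α, rfl, rfl⟩
        | trans a b c _ _ ih₁ ih₂ =>
          rcases ih₁ with rfl | ⟨i, α, β, rfl, rfl⟩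
          · exact ih₂
          · rcases ih₂ with h' | ⟨j, α', β', he', rfl⟩
            · exact Or.inr ⟨i, α, β, rfl, h'.symm ▸ rfl⟩
            · injection he' with hij _
              subst hij
              exact Or.inr ⟨i, α, β', rfl, rfl⟩
      rcases key t₁ t₂ h with rfl | ⟨i, α, β, rfl, rfl⟩
      · cases t₁ with
        | var x => exact absurd rfl (h₁ x)
        | op i α => exact ⟨i, ⟨α, rfl⟩, ⟨α, rfl⟩⟩
      · exact ⟨i, ⟨α, rfl⟩, ⟨β, rfl⟩⟩
    · rintro ⟨i, ⟨α, rfl⟩, ⟨β, rfl⟩⟩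
      exact Relation.EqvGen.trans _ _ _
        (Relation.EqvGen.symm _ _ (Relation.EqvGen.rel _ _ (canonRel i α)))
        (Relation.EqvGen.rel _ _ (canonRel i β))
  · intro i j h
    have hmem : AlgTerm.op i (fun k => AlgTerm.var ((hX i).some k)) ∈
        {t : AlgTerm K X | ∃ β : K j → AlgTerm K X, t = AlgTerm.op j β} :=
      Set.ext_iff.mp h _ |>.mp ⟨_, rfl⟩
    obtain ⟨β, hβ⟩ := hmem
    injection hβ with hij _
end

section
/- Let Δ = (K_i)_{i∈I} with each K_i finite and I finite, and Δ' = (L_j)_{j∈J} likewise. If the term algebras (absolutely free algebras) on every set X are isomorphic as sets equipped with their endomorphism monoids compatibly with the inclusion of X, for all X, then Δ and Δ' are equivalent types. -/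
universe u

open CategoryTheory

namespace Stmt19

variable {I : Type u} {K : I → Type u} {X : Type u}

/-- Substitution on terms. -/
def extS (σ : X → AlgTerm K X) : AlgTerm K X → AlgTerm K X :=
  extendHom (A := TermAlg K X) σ

@[simp] lemma extS_var (σ : X → AlgTerm K X) (x : X) :
    extS σ (AlgTerm.var x) = σ x := rfl

@[simp] lemma extS_op (σ : X → AlgTerm K X) (i : I) (β : K i → AlgTerm K X) :
    extS σ (AlgTerm.op i β) = AlgTerm.op i fun k => extS σ (β k) := rfl

/-- The endomorphism of the term algebra induced by an assignment. -/
def mkEnd (σ : X → AlgTerm K X) : HomOfAlg K (TermAlg K X) (TermAlg K X) :=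
  ⟨extS σ, fun _ _ => rfl⟩

lemma hom_eq_extS (h : HomOfAlg K (TermAlg K X) (TermAlg K X)) :
    ∀ t, h.toFun t = extS (fun x => h.toFun (AlgTerm.var x)) t
  | .var _ => rfl
  | .op i β => by
    have h1 : h.toFun (AlgTerm.op i β) = AlgTerm.op i fun k => h.toFun (β k) :=
      h.map_op i β
    rw [h1]
    exact congrArg (AlgTerm.op i) (funext fun k => hom_eq_extS h (β k))

/-- `t` depends on the variable `x`. -/
def Dep (t : AlgTerm K X) (x : X) : Prop :=
  ∃ σ σ' : X → AlgTerm K X, (∀ y, y ≠ x → σ y = σ' y) ∧ extS σ t ≠ extS σ' t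

def IsVar (t : AlgTerm K X) : Prop := ∃ x, t = AlgTerm.var x

/-- `t` is a depth-one term (characterized substitution-theoretically). -/
def Simple (t : AlgTerm K X) : Prop :=
  ¬ IsVar t ∧ ∀ s σ, extS σ s = t → IsVar s ∨ ∀ x, Dep s x → IsVar (σ x)

lemma op_inj_idx {i i' : I} {β : K i → AlgTerm K X} {β' : K i' → AlgTerm K X}
    (h : AlgTerm.op i β = AlgTerm.op i' β') : i = i' := by
  injection h

lemma op_inj {i : I} {β β' : K i → AlgTerm K X}
    (h : AlgTerm.op i β = AlgTerm.op i β') : β = β' := by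
  injection h with h1 h2

lemma dep_op_var_subset {i : I} {f : K i → X} {x : X}
    (h : Dep (AlgTerm.op i fun k => AlgTerm.var (f k)) x) : x ∈ Set.range f := by
  obtain ⟨σ, σ', hag, hne⟩ := h
  by_contra hxr
  apply hne
  rw [extS_op, extS_op]
  congr 1
  funext k
  rw [extS_var, extS_var]
  exact hag _ (fun hh => hxr ⟨k, hh⟩)

lemma dep_of_mem_range [Nontrivial X] {i : I} {f : K i → X} {x : X}
    (h : x ∈ Set.range f) : Dep (AlgTerm.op i fun k => AlgTerm.var (f k)) x := by
  classical
  obtain ⟨k₀, hk₀⟩ := h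
  obtain ⟨x', hx'⟩ := exists_ne x
  refine ⟨AlgTerm.var, fun y => if y = x then AlgTerm.var x' else AlgTerm.var y, ?_, ?_⟩
  · intro y hy; simp [hy]
  · rw [extS_op, extS_op]
    intro hEq
    have h2 := congrFun (op_inj hEq) k₀
    simp only [extS_var, hk₀, if_pos rfl] at h2
    injection h2 with h3
    exact hx' h3.symm

lemma depSet_op_var [Nontrivial X] {i : I} {f : K i → X} :
    {x | Dep (AlgTerm.op i fun k => AlgTerm.var (f k)) x} = Set.range f :=
  Set.eq_of_subset_of_subset (fun _ h => dep_op_var_subset h)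
    (fun _ h => dep_of_mem_range h)

lemma simple_of_depth1 {i : I} (f : K i → X) :
    Simple (AlgTerm.op i fun k => AlgTerm.var (f k)) := by
  constructor
  · rintro ⟨x, hx⟩; cases hx
  · intro s σ hs
    cases s with
    | var y => exact Or.inl ⟨y, rfl⟩
    | op i' β =>
      right
      rw [extS_op] at hs
      have hii : i' = i := op_inj_idx hs
      subst hii
      have hβ : ∀ k, extS σ (β k) = AlgTerm.var (f k) := fun k => congrFun (op_inj hs) k
      have hβv : ∀ k, ∃ y, β k = AlgTerm.var y := by
        intro k
        cases hb : β k with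
        | var y => exact ⟨y, rfl⟩
        | op i'' γ =>
          exfalso
          have := hβ k
          rw [hb, extS_op] at this
          cases this
      choose g hg using hβv
      intro x hx
      have hβeq : β = fun k => AlgTerm.var (g k) := funext hg
      rw [hβeq] at hx
      obtain ⟨k, hk⟩ := dep_op_var_subset hx
      refine ⟨f k, ?_⟩
      have := hβ k
      rw [hg k, extS_var, hk] at this
      exact this

lemma depth1_of_simple [Infinite X] {t : AlgTerm K X} (hKfin : ∀ i, Finite (K i))
    (ht : Simple t) :
    ∃ i, ∃ f : K i → X, t = AlgTerm.op i fun k => AlgTerm.var (f k) := by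
  obtain ⟨hnv, hs⟩ := ht
  cases t with
  | var x => exact absurd ⟨x, rfl⟩ hnv
  | op i β =>
    refine ⟨i, ?_⟩
    have hall : ∀ k, ∃ y, β k = AlgTerm.var y := by
      by_contra hk
      push_neg at hk
      obtain ⟨k₀, hk₀⟩ := hk
      have : Finite (K i) := hKfin i
      obtain ⟨n, ⟨eqv⟩⟩ := Finite.exists_equiv_fin (K i)
      let emb : K i ↪ X := eqv.toEmbedding.trans (Fin.valEmbedding.trans (Infinite.natEmbedding X))
      have h1 : extS (Function.extend emb β AlgTerm.var)
          (AlgTerm.op i fun k => AlgTerm.var (emb k)) = AlgTerm.op i β := by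
        rw [extS_op]
        congr 1
        funext k
        rw [extS_var]
        exact emb.injective.extend_apply β AlgTerm.var k
      rcases hs _ _ h1 with hv | hd
      · obtain ⟨x, hx⟩ := hv; cases hx
      · have hdep : Dep (AlgTerm.op i fun k => AlgTerm.var (emb k)) (emb k₀) :=
          dep_of_mem_range ⟨k₀, rfl⟩
        obtain ⟨y, hy⟩ := hd _ hdep
        rw [emb.injective.extend_apply β AlgTerm.var k₀] at hy
        exact hk₀ y hy
    choose g hg using hall
    exact ⟨g, congrArg _ (funext hg)⟩

section Transfer

variable {J : Type u} {L : J → Type u}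
variable (e : AlgTerm K X ≃ AlgTerm L X)
variable (hvar : ∀ x, e (AlgTerm.var x) = AlgTerm.var x)
variable (hkey : ∀ (σ : X → AlgTerm K X) t,
    e (extS σ t) = extS (fun x => e (σ x)) (e t))

include hkey in
lemma key_symm : ∀ (ρ : X → AlgTerm L X) s,
    e.symm (extS ρ s) = extS (fun x => e.symm (ρ x)) (e.symm s) := by
  intro ρ s
  apply e.injective
  rw [hkey]
  simp [Equiv.apply_symm_apply]

include hkey in
lemma dep_transfer (t : AlgTerm K X) (x : X) : Dep t x ↔ Dep (e t) x := by
  constructor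
  · rintro ⟨σ, σ', hag, hne⟩
    refine ⟨fun y => e (σ y), fun y => e (σ' y), fun y hy => congrArg e (hag y hy), ?_⟩
    rw [← hkey, ← hkey]
    exact fun hh => hne (e.injective hh)
  · rintro ⟨ρ, ρ', hag, hne⟩
    refine ⟨fun y => e.symm (ρ y), fun y => e.symm (ρ' y),
      fun y hy => congrArg e.symm (hag y hy), ?_⟩
    intro hh
    apply hne
    have := congrArg e hh
    rw [hkey, hkey] at this
    simpa [Equiv.apply_symm_apply] using this

include hvar in
lemma isVar_transfer (t : AlgTerm K X) : IsVar t ↔ IsVar (e t) := by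
  constructor
  · rintro ⟨x, rfl⟩; exact ⟨x, hvar x⟩
  · rintro ⟨x, hx⟩
    refine ⟨x, e.injective ?_⟩
    rw [hx, hvar]

include hvar hkey in
lemma simple_transfer {t : AlgTerm K X} (ht : Simple t) : Simple (e t) := by
  obtain ⟨hnv, hs⟩ := ht
  constructor
  · intro hv
    exact hnv ((isVar_transfer e hvar t).2 hv)
  · intro s' σ' hs'
    have hmain : extS (fun x => e.symm (σ' x)) (e.symm s') = t := by
      apply e.injective
      rw [hkey]
      simp only [Equiv.apply_symm_apply]
      exact hs'
    rcases hs _ _ hmain with hv | hd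
    · left
      have := (isVar_transfer e hvar _).1 hv
      rwa [Equiv.apply_symm_apply] at this
    · right
      intro x hx
      have hx' : Dep (e.symm s') x := by
        rw [dep_transfer e hkey, Equiv.apply_symm_apply]
        exact hx
      have := (isVar_transfer e hvar _).1 (hd x hx')
      rwa [Equiv.apply_symm_apply] at this

include hvar hkey in
lemma image_class {i : I} {j : J} {emb : K i → X} (hinj : Function.Injective emb)
    {fj : L j → X}
    (hb : e (AlgTerm.op i fun k => AlgTerm.var (emb k)) = AlgTerm.op j fun k => AlgTerm.var (fj k))
    (g : K i → X) :
    ∃ f' : L j → X,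
      e (AlgTerm.op i fun k => AlgTerm.var (g k)) = AlgTerm.op j fun k => AlgTerm.var (f' k) := by
  classical
  set ζ : X → X := Function.extend emb g id with hζ
  have h1 : extS (fun x => AlgTerm.var (ζ x)) (AlgTerm.op i fun k => AlgTerm.var (emb k))
      = AlgTerm.op i fun k => AlgTerm.var (g k) := by
    rw [extS_op]
    congr 1
    funext k
    rw [extS_var, hζ, hinj.extend_apply g id k]
  refine ⟨fun k => ζ (fj k), ?_⟩
  rw [← h1, hkey, hb, extS_op]
  congr 1
  funext k
  rw [extS_var]
  exact hvar _

end Transfer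

end Stmt19

/-- if for every set `X` the term algebras of the two (finitary, finite) types
over `X` are isomorphic as sets with endomorphism monoids, compatibly with the inclusion of
`X`, then the types are equivalent. -/
theorem term_algebra_endo_monoids_determine_type {I J : Type u}
    (K : I → Type u) (L : J → Type u) [Finite I] [Finite J]
    (hK : ∀ i, Finite (K i)) (hL : ∀ j, Finite (L j))
    (h : ∀ X : Type u, ∃ e : AlgTerm K X ≃ AlgTerm L X,
      (∀ x : X, e (AlgTerm.var x) = AlgTerm.var x) ∧
      (∀ σ : HomOfAlg K (TermAlg K X) (TermAlg K X),
        ∃ τ : HomOfAlg L (TermAlg L X) (TermAlg L X),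
          ∀ t, e (σ.toFun t) = τ.toFun (e t)) ∧
      (∀ τ : HomOfAlg L (TermAlg L X) (TermAlg L X),
        ∃ σ : HomOfAlg K (TermAlg K X) (TermAlg K X),
          ∀ t, e (σ.toFun t) = τ.toFun (e t))) :
    EquivType K L := by
  classical
  set X := ULift.{u} ℕ with hX
  obtain ⟨e, hvar, hfwd, -⟩ := h X
  have hkey : ∀ (σ : X → AlgTerm K X) (t : AlgTerm K X),
      e (Stmt19.extS σ t) = Stmt19.extS (fun x => e (σ x)) (e t) := by
    intro σ t
    obtain ⟨τ, hτ⟩ := hfwd (Stmt19.mkEnd σ)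
    have h2 : ∀ x, τ.toFun (AlgTerm.var x) = e (σ x) := by
      intro x
      have h3 := hτ (AlgTerm.var x)
      rw [hvar x] at h3
      exact h3.symm
    exact (hτ t).trans ((Stmt19.hom_eq_extS τ (e t)).trans
      (congrArg (fun f => Stmt19.extS f (e t)) (funext h2)))
  have hkey' := Stmt19.key_symm e hkey
  have hvar' : ∀ x : X, e.symm (AlgTerm.var x) = AlgTerm.var x := by
    intro x
    rw [← hvar x, Equiv.symm_apply_apply]
  -- embeddings of arities into X
  have embKex : ∀ i : I, ∃ f : K i → X, Function.Injective f := by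
    intro i
    have := hK i
    obtain ⟨n, ⟨eqv⟩⟩ := Finite.exists_equiv_fin (K i)
    exact ⟨fun k => (Infinite.natEmbedding X) (eqv k).val,
      (Infinite.natEmbedding X).injective.comp (Fin.val_injective.comp eqv.injective)⟩
  choose embK hembK using embKex
  have embLex : ∀ j : J, ∃ f : L j → X, Function.Injective f := by
    intro j
    have := hL j
    obtain ⟨n, ⟨eqv⟩⟩ := Finite.exists_equiv_fin (L j)
    exact ⟨fun k => (Infinite.natEmbedding X) (eqv k).val,
      (Infinite.natEmbedding X).injective.comp (Fin.val_injective.comp eqv.injective)⟩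
  choose embL hembL using embLex
  -- images of basic terms are depth-one
  have himg : ∀ i : I, ∃ j, ∃ f : L j → X,
      e (AlgTerm.op i fun k => AlgTerm.var (embK i k)) = AlgTerm.op j fun k => AlgTerm.var (f k) :=
    fun i => Stmt19.depth1_of_simple hL
      (Stmt19.simple_transfer e hvar hkey (Stmt19.simple_of_depth1 (embK i)))
  choose φ0 fK hfK using himg
  have himg' : ∀ j : J, ∃ i, ∃ f : K i → X,
      e.symm (AlgTerm.op j fun k => AlgTerm.var (embL j k)) = AlgTerm.op i fun k => AlgTerm.var (f k) :=
    fun j => Stmt19.depth1_of_simple hK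
      (Stmt19.simple_transfer e.symm hvar' hkey' (Stmt19.simple_of_depth1 (embL j)))
  choose ψ0 fL hfL using himg'
  -- ψ0 ∘ φ0 = id
  have hleft : ∀ i, ψ0 (φ0 i) = i := by
    intro i
    obtain ⟨f', hf'⟩ := Stmt19.image_class e.symm hvar' hkey' (hembL (φ0 i)) (hfL (φ0 i)) (fK i)
    rw [← hfK i, Equiv.symm_apply_apply] at hf'
    exact (Stmt19.op_inj_idx hf').symm
  have hright : ∀ j, φ0 (ψ0 j) = j := by
    intro j
    obtain ⟨f', hf'⟩ := Stmt19.image_class e hvar hkey (hembK (ψ0 j)) (hfK (ψ0 j)) (fL j)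
    rw [← hfL j, Equiv.apply_symm_apply] at hf'
    exact (Stmt19.op_inj_idx hf').symm
  -- cardinality comparisons
  have hcardK : ∀ i : I, Nat.card (K i) ≤ Nat.card (L (φ0 i)) := by
    intro i
    have hds : Set.range (embK i) = Set.range (fK i) := by
      rw [← Stmt19.depSet_op_var (i := i) (f := embK i),
        ← Stmt19.depSet_op_var (i := φ0 i) (f := fK i)]
      ext x
      simp only [Set.mem_setOf_eq]
      rw [Stmt19.dep_transfer e hkey, hfK i]
    have h1 : Nat.card (K i) = Nat.card (Set.range (fK i)) := by
      rw [← hds, Nat.card_range_of_injective (hembK i)]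
    have := hL (φ0 i)
    rw [h1]
    exact Nat.card_le_card_of_surjective (Set.rangeFactorization (fK i))
      Set.rangeFactorization_surjective
  have hcardL : ∀ j : J, Nat.card (L j) ≤ Nat.card (K (ψ0 j)) := by
    intro j
    have hds : Set.range (embL j) = Set.range (fL j) := by
      rw [← Stmt19.depSet_op_var (i := j) (f := embL j),
        ← Stmt19.depSet_op_var (i := ψ0 j) (f := fL j)]
      ext x
      simp only [Set.mem_setOf_eq]
      rw [Stmt19.dep_transfer e.symm hkey', hfL j]
    have h1 : Nat.card (L j) = Nat.card (Set.range (fL j)) := by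
      rw [← hds, Nat.card_range_of_injective (hembL j)]
    have := hK (ψ0 j)
    rw [h1]
    exact Nat.card_le_card_of_surjective (Set.rangeFactorization (fL j))
      Set.rangeFactorization_surjective
  refine ⟨⟨φ0, ψ0, hleft, hright⟩, ?_⟩
  intro i
  have := hK i
  have := hL (φ0 i)
  have hle2 := hcardL (φ0 i)
  rw [hleft i] at hle2
  exact Finite.card_eq.mp (le_antisymm (hcardK i) hle2)
end
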